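/- arXiv:2205.08295 — 6 statements merged into one kernel-verified Lean document; each statement's English description precedes it below -/
import Mathlib

section
/- Let d, n ≥ 1 be integers, λ > 0, let (l_{jk})_{1≤j,k≤n} be real numbers with l_{kk} > 0 for all k, and fix j with Σ_{k≠j} l_{jk}²/(l_{jj} l_{kk}) ≤ 1. For each k let B_k ∈ ℝ^{d×d} be a symmetric matrix such that B_k − λ l_{kk} I_d is positive semidefinite (so each B_k is positive definite), and set Γ_j = B_j + λ² Σ_{k≠j} l_{jk}² B_k^{-1} (positive definite). Then for all x, y ∈ ℝ^d, xᵀ B_j^{-1} y ≤ √2 · ‖x‖_{Γ_j^{-1}} · ‖y‖_{B_j^{-1}}. -/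
open Matrix Finset

lemma aux_symm {d : ℕ} {M : Matrix (Fin d) (Fin d) ℝ} (hM : M.IsHermitian)
    (x y : Fin d → ℝ) : x ⬝ᵥ M *ᵥ y = y ⬝ᵥ M *ᵥ x := by
  have ht : Mᵀ = M := by
    simpa [Matrix.conjTranspose, Matrix.IsSymm] using hM
  rw [dotProduct_mulVec]
  nth_rewrite 1 [← ht]
  rw [vecMul_transpose, dotProduct_comm]

lemma aux_nonneg {d : ℕ} {M : Matrix (Fin d) (Fin d) ℝ} (hM : M.PosSemidef)
    (x : Fin d → ℝ) : 0 ≤ x ⬝ᵥ M *ᵥ x := by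
  simpa using hM.dotProduct_mulVec_nonneg x

lemma aux_cs {d : ℕ} {M : Matrix (Fin d) (Fin d) ℝ} (hM : M.PosSemidef)
    (x y : Fin d → ℝ) : (x ⬝ᵥ M *ᵥ y) ^ 2 ≤ (x ⬝ᵥ M *ᵥ x) * (y ⬝ᵥ M *ᵥ y) := by
  have h : ∀ t : ℝ, 0 ≤ (y ⬝ᵥ M *ᵥ y) * (t * t) + (2 * (x ⬝ᵥ M *ᵥ y)) * t + (x ⬝ᵥ M *ᵥ x) := by
    intro t
    have := aux_nonneg hM (x + t • y)
    have hsym := aux_symm hM.1 y x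
    simp only [add_dotProduct, mulVec_add, dotProduct_add, mulVec_smul, dotProduct_smul,
      smul_dotProduct, smul_eq_mul] at this
    rw [hsym] at this
    nlinarith [this]
  have hd := discrim_le_zero h
  rw [discrim] at hd
  nlinarith [hd]

lemma aux_inv_le {d : ℕ} {A B : Matrix (Fin d) (Fin d) ℝ} (hA : A.PosDef) (hB : B.PosDef)
    (hAB : (B - A).PosSemidef) (x : Fin d → ℝ) :
    x ⬝ᵥ B⁻¹ *ᵥ x ≤ x ⬝ᵥ A⁻¹ *ᵥ x := by
  set u := B⁻¹ *ᵥ x with hu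
  have hBu : B *ᵥ u = x := by
    rw [hu, mulVec_mulVec, Matrix.mul_nonsing_inv _ hB.det_pos.ne'.isUnit, one_mulVec]
  have hAx : A *ᵥ (A⁻¹ *ᵥ x) = x := by
    rw [mulVec_mulVec, Matrix.mul_nonsing_inv _ hA.det_pos.ne'.isUnit, one_mulVec]
  have hcs := aux_cs hA.posSemidef u (A⁻¹ *ᵥ x)
  rw [hAx] at hcs
  have hux : u ⬝ᵥ x = x ⬝ᵥ B⁻¹ *ᵥ x := dotProduct_comm _ _
  have h2 : (A⁻¹ *ᵥ x) ⬝ᵥ x = x ⬝ᵥ A⁻¹ *ᵥ x := dotProduct_comm _ _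
  rw [hux, h2] at hcs
  have hAu : u ⬝ᵥ A *ᵥ u ≤ x ⬝ᵥ B⁻¹ *ᵥ x := by
    have := aux_nonneg hAB u
    rw [sub_mulVec, dotProduct_sub, hBu, hux] at this
    linarith
  have ht0 : 0 ≤ x ⬝ᵥ B⁻¹ *ᵥ x := aux_nonneg hB.inv.posSemidef x
  have hA0 : 0 ≤ x ⬝ᵥ A⁻¹ *ᵥ x := aux_nonneg hA.inv.posSemidef x
  have hAu0 : 0 ≤ u ⬝ᵥ A *ᵥ u := aux_nonneg hA.posSemidef u
  rcases eq_or_lt_of_le ht0 with h | h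
  · linarith
  · nlinarith [hcs, hAu, h]

lemma aux_smul_one_posdef {d : ℕ} {c : ℝ} (hc : 0 < c) :
    (c • (1 : Matrix (Fin d) (Fin d) ℝ)).PosDef := by
  rw [smul_one_eq_diagonal]
  exact Matrix.posDef_diagonal_iff.mpr fun _ => hc

lemma aux_smul_one_inv {d : ℕ} {c : ℝ} (hc : 0 < c) :
    (c • (1 : Matrix (Fin d) (Fin d) ℝ))⁻¹ = c⁻¹ • 1 := by
  apply Matrix.inv_eq_right_inv
  rw [smul_mul_smul_comm, one_mul, mul_inv_cancel₀ hc.ne']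
  simp

/-- Lemma 3.1 (Lemma `Gamma`) of the paper. -/
theorem stmt_0 (d n : ℕ) (hd : 1 ≤ d) (hn : 1 ≤ n) (lam : ℝ) (hlam : 0 < lam)
    (l : Fin n → Fin n → ℝ) (hl : ∀ k, 0 < l k k) (j : Fin n)
    (hsum : ∑ k ∈ Finset.univ.erase j, (l j k) ^ 2 / (l j j * l k k) ≤ 1)
    (B : Fin n → Matrix (Fin d) (Fin d) ℝ)
    (hB : ∀ k, (B k - (lam * l k k) • (1 : Matrix (Fin d) (Fin d) ℝ)).PosSemidef)
    (Γ : Matrix (Fin d) (Fin d) ℝ)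
    (hΓ : Γ = B j + lam ^ 2 • ∑ k ∈ Finset.univ.erase j, (l j k) ^ 2 • (B k)⁻¹)
    (x y : Fin d → ℝ) :
    x ⬝ᵥ (B j)⁻¹.mulVec y ≤
      Real.sqrt 2 * Real.sqrt (x ⬝ᵥ Γ⁻¹.mulVec x) * Real.sqrt (y ⬝ᵥ (B j)⁻¹.mulVec y) := by
  have hc : ∀ k, (0:ℝ) < lam * l k k := fun k => mul_pos hlam (hl k)
  -- each B k is positive definite
  have hPD : ∀ k, (B k).PosDef := by
    intro k
    have := Matrix.PosDef.posSemidef_add (hB k) (aux_smul_one_posdef (hc k))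
    simpa using this
  -- quadratic-form lower bound: lam * l k k * (z ⬝ᵥ z) ≤ z ⬝ᵥ B k *ᵥ z
  have hlow : ∀ k (z : Fin d → ℝ), lam * l k k * (z ⬝ᵥ z) ≤ z ⬝ᵥ B k *ᵥ z := by
    intro k z
    have := aux_nonneg (hB k) z
    rw [sub_mulVec, dotProduct_sub] at this
    have h1 : z ⬝ᵥ ((lam * l k k) • (1 : Matrix (Fin d) (Fin d) ℝ)) *ᵥ z
        = lam * l k k * (z ⬝ᵥ z) := by
      simp [smul_mulVec, dotProduct_smul]
    linarith [this, h1.ge]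
  -- inverse upper bound
  have hinvle : ∀ k (z : Fin d → ℝ),
      z ⬝ᵥ (B k)⁻¹ *ᵥ z ≤ (lam * l k k)⁻¹ * (z ⬝ᵥ z) := by
    intro k z
    have := aux_inv_le (aux_smul_one_posdef (hc k)) (hPD k) (hB k) z
    rw [aux_smul_one_inv (hc k)] at this
    simpa [smul_mulVec, dotProduct_smul] using this
  -- quadratic form of Γ
  have hquad : ∀ z : Fin d → ℝ, z ⬝ᵥ Γ *ᵥ z =
      z ⬝ᵥ B j *ᵥ z + lam ^ 2 * ∑ k ∈ Finset.univ.erase j,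
        (l j k) ^ 2 * (z ⬝ᵥ (B k)⁻¹ *ᵥ z) := by
    intro z
    rw [hΓ]
    simp only [add_mulVec, dotProduct_add, smul_mulVec, dotProduct_smul, smul_eq_mul]
    congr 1
    rw [Finset.mul_sum]
    have key : ∀ s : Finset (Fin n), z ⬝ᵥ (∑ k ∈ s, (l j k) ^ 2 • (B k)⁻¹) *ᵥ z
        = ∑ k ∈ s, (l j k) ^ 2 * (z ⬝ᵥ (B k)⁻¹ *ᵥ z) := by
      intro s
      induction s using Finset.induction with
      | empty => simp
      | insert _ _ h ih =>
        rw [Finset.sum_insert h, Finset.sum_insert h, add_mulVec, dotProduct_add,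
          smul_mulVec, dotProduct_smul, ih, smul_eq_mul]
    rw [key, Finset.mul_sum]
  -- sum inequality from hsum
  have hS : ∑ k ∈ Finset.univ.erase j, (l j k) ^ 2 / l k k ≤ l j j := by
    have h1 : ∑ k ∈ Finset.univ.erase j, (l j k) ^ 2 / (l j j * l k k)
        = (∑ k ∈ Finset.univ.erase j, (l j k) ^ 2 / l k k) / l j j := by
      rw [Finset.sum_div]
      refine Finset.sum_congr rfl fun k _ => ?_
      rw [div_div, mul_comm]
    rw [h1, div_le_one (hl j)] at hsum
    exact hsum
  -- Γ ≤ 2 B j in quadratic form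
  have hΓ2 : ∀ z : Fin d → ℝ, z ⬝ᵥ Γ *ᵥ z ≤ 2 * (z ⬝ᵥ B j *ᵥ z) := by
    intro z
    have hzz : 0 ≤ z ⬝ᵥ z := by
      refine Finset.sum_nonneg fun i _ => mul_self_nonneg _
    have hsum1 : ∑ k ∈ Finset.univ.erase j, (l j k) ^ 2 * (z ⬝ᵥ (B k)⁻¹ *ᵥ z)
        ≤ ∑ k ∈ Finset.univ.erase j, (l j k) ^ 2 * ((lam * l k k)⁻¹ * (z ⬝ᵥ z)) :=
      Finset.sum_le_sum fun k _ => mul_le_mul_of_nonneg_left (hinvle k z) (sq_nonneg _)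
    have heq : lam ^ 2 * ∑ k ∈ Finset.univ.erase j, (l j k) ^ 2 * ((lam * l k k)⁻¹ * (z ⬝ᵥ z))
        = lam * ((∑ k ∈ Finset.univ.erase j, (l j k) ^ 2 / l k k) * (z ⬝ᵥ z)) := by
      rw [Finset.mul_sum, Finset.sum_mul, Finset.mul_sum]
      refine Finset.sum_congr rfl fun k hk => ?_
      field_simp [hlam.ne', (hl k).ne']
    have hmono : lam * ((∑ k ∈ Finset.univ.erase j, (l j k) ^ 2 / l k k) * (z ⬝ᵥ z))
        ≤ lam * (l j j * (z ⬝ᵥ z)) :=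
      mul_le_mul_of_nonneg_left (mul_le_mul_of_nonneg_right hS hzz) hlam.le
    have hbj := hlow j z
    rw [hquad z]
    have h5 : lam ^ 2 * ∑ k ∈ Finset.univ.erase j, (l j k) ^ 2 * (z ⬝ᵥ (B k)⁻¹ *ᵥ z)
        ≤ lam ^ 2 * ∑ k ∈ Finset.univ.erase j, (l j k) ^ 2 * ((lam * l k k)⁻¹ * (z ⬝ᵥ z)) :=
      mul_le_mul_of_nonneg_left hsum1 (sq_nonneg _)
    nlinarith [h5, heq, hmono, hbj]
  -- hermitian facts
  have hΓH : Γ.IsHermitian := by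
    show Γᴴ = Γ
    rw [hΓ, conjTranspose_add, conjTranspose_smul, conjTranspose_sum, star_trivial,
      (hPD j).isHermitian.eq]
    congr 2
    refine Finset.sum_congr rfl fun k _ => ?_
    rw [conjTranspose_smul, star_trivial, ((hPD k).isHermitian.inv).eq]
  have hΓPD : Γ.PosDef := by
    refine Matrix.PosDef.of_dotProduct_mulVec_pos hΓH fun z hz => ?_
    simp only [star_trivial]
    have h0 := (hPD j).dotProduct_mulVec_pos hz
    simp only [star_trivial] at h0
    have hnn : 0 ≤ lam ^ 2 * ∑ k ∈ Finset.univ.erase j,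
        (l j k) ^ 2 * (z ⬝ᵥ (B k)⁻¹ *ᵥ z) := by
      refine mul_nonneg (sq_nonneg _) (Finset.sum_nonneg fun k _ => ?_)
      exact mul_nonneg (sq_nonneg _) (aux_nonneg (hPD k).inv.posSemidef z)
    rw [hquad z]
    linarith
  have h2BPD : ((2:ℝ) • B j).PosDef := by
    rw [two_smul]
    exact (hPD j).add (hPD j)
  have hdiffPSD : ((2:ℝ) • B j - Γ).PosSemidef := by
    refine Matrix.PosSemidef.of_dotProduct_mulVec_nonneg (h2BPD.isHermitian.sub hΓH) fun z => ?_
    simp only [star_trivial, sub_mulVec, dotProduct_sub, smul_mulVec,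
      dotProduct_smul, smul_eq_mul]
    linarith [hΓ2 z]
  have hkey := aux_inv_le hΓPD h2BPD hdiffPSD x
  have hinv2 : ((2:ℝ) • B j)⁻¹ = (2:ℝ)⁻¹ • (B j)⁻¹ := by
    apply Matrix.inv_eq_right_inv
    rw [smul_mul_smul_comm, Matrix.mul_nonsing_inv _ (hPD j).det_pos.ne'.isUnit]
    norm_num
  rw [hinv2] at hkey
  simp only [smul_mulVec, dotProduct_smul, smul_eq_mul] at hkey
  have hcs := aux_cs (hPD j).inv.posSemidef x y
  have ha : 0 ≤ x ⬝ᵥ Γ⁻¹ *ᵥ x := aux_nonneg hΓPD.inv.posSemidef x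
  have hb : 0 ≤ y ⬝ᵥ (B j)⁻¹ *ᵥ y := aux_nonneg (hPD j).inv.posSemidef y
  calc x ⬝ᵥ (B j)⁻¹ *ᵥ y ≤ |x ⬝ᵥ (B j)⁻¹ *ᵥ y| := le_abs_self _
    _ = Real.sqrt ((x ⬝ᵥ (B j)⁻¹ *ᵥ y) ^ 2) := (Real.sqrt_sq_eq_abs _).symm
    _ ≤ Real.sqrt (2 * (x ⬝ᵥ Γ⁻¹ *ᵥ x) * (y ⬝ᵥ (B j)⁻¹ *ᵥ y)) := by
        apply Real.sqrt_le_sqrt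
        nlinarith [hcs, hkey, hb]
    _ = Real.sqrt 2 * Real.sqrt (x ⬝ᵥ Γ⁻¹ *ᵥ x) * Real.sqrt (y ⬝ᵥ (B j)⁻¹ *ᵥ y) := by
        rw [Real.sqrt_mul (by positivity), Real.sqrt_mul (by norm_num)]
end

section
/- Let d, n ≥ 1 be integers, λ > 0, let (l_{jk})_{1≤j,k≤n} be real numbers with l_{kk} > 0 for all k, and fix j with Σ_{k≠j} l_{jk}²/(l_{jj} l_{kk}) ≤ 1. For each k let B_k ∈ ℝ^{d×d} be a symmetric matrix such that B_k − λ l_{kk} I_d is positive semidefinite (so each B_k is positive definite), and set Γ_j = B_j + λ² Σ_{k≠j} l_{jk}² B_k^{-1}. Then for every y ∈ ℝ^d, yᵀ B_j^{-1} Γ_j B_j^{-1} y ≤ 2 · yᵀ B_j^{-1} y. -/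
open Matrix Finset

private lemma posdef_of_ge (d : ℕ) (c : ℝ) (hc : 0 < c) (A : Matrix (Fin d) (Fin d) ℝ)
    (hA : (A - c • 1).PosSemidef) : A.PosDef := by
  have h1 : ((c : ℝ) • (1 : Matrix (Fin d) (Fin d) ℝ)).PosDef := by
    have := Matrix.posDef_diagonal_iff (d := fun _ : Fin d => c)
    rw [show (c • (1 : Matrix (Fin d) (Fin d) ℝ)) = Matrix.diagonal (fun _ => c) by
      ext i k; by_cases h : i = k <;> simp [Matrix.one_apply, h]]
    exact Matrix.posDef_diagonal_iff.mpr (fun _ => hc)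
  have := Matrix.PosDef.posSemidef_add hA h1
  simpa using this

private lemma quad_ge (d : ℕ) (c : ℝ) (A : Matrix (Fin d) (Fin d) ℝ)
    (hA : (A - c • 1).PosSemidef) (z : Fin d → ℝ) :
    c * (z ⬝ᵥ z) ≤ z ⬝ᵥ A.mulVec z := by
  have := hA.dotProduct_mulVec_nonneg z
  simp only [sub_mulVec, dotProduct_sub, smul_mulVec, one_mulVec,
    dotProduct_smul, star_trivial, smul_eq_mul] at this
  linarith

/-- If `A ⪰ c • 1` with `c > 0` then `x ⬝ A⁻¹ x ≤ c⁻¹ (x ⬝ x)`. -/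
private lemma inv_quad_le (d : ℕ) (c : ℝ) (hc : 0 < c) (A : Matrix (Fin d) (Fin d) ℝ)
    (hA : (A - c • 1).PosSemidef) (x : Fin d → ℝ) :
    x ⬝ᵥ A⁻¹.mulVec x ≤ c⁻¹ * (x ⬝ᵥ x) := by
  have hApd : A.PosDef := posdef_of_ge d c hc A hA
  set z : Fin d → ℝ := A⁻¹.mulVec x with hz
  have hAx : A.mulVec z = x := by
    rw [hz, Matrix.mulVec_mulVec, Matrix.mul_nonsing_inv A hApd.det_pos.ne'.isUnit,
      Matrix.one_mulVec]
  have hzx : 0 ≤ z ⬝ᵥ x := by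
    have h := hApd.posSemidef.dotProduct_mulVec_nonneg z
    simpa [hAx] using h
  have key : c * (z ⬝ᵥ z) ≤ z ⬝ᵥ x := by
    have h := quad_ge d c A hA z
    rwa [hAx] at h
  have ezz : z ⬝ᵥ z = ∑ i, z i ^ 2 := by simp [dotProduct, sq]
  have exx : x ⬝ᵥ x = ∑ i, x i ^ 2 := by simp [dotProduct, sq]
  have hcs : (z ⬝ᵥ x) ^ 2 ≤ (z ⬝ᵥ z) * (x ⬝ᵥ x) := by
    rw [ezz, exx]
    exact Finset.sum_mul_sq_le_sq_mul_sq Finset.univ z x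
  have hxx : 0 ≤ x ⬝ᵥ x := by rw [exx]; positivity
  have hzz : 0 ≤ z ⬝ᵥ z := by rw [ezz]; positivity
  have hgoal : x ⬝ᵥ A⁻¹.mulVec x = z ⬝ᵥ x := dotProduct_comm x z
  rw [hgoal, inv_mul_eq_div, le_div_iff₀ hc]
  rcases eq_or_lt_of_le hzx with h0 | h0
  · nlinarith
  · nlinarith [mul_le_mul_of_nonneg_right key hxx, mul_le_mul_of_nonneg_left hcs hc.le]

set_option maxHeartbeats 1000000 in
/-- key inequality `B_j⁻¹ Γ_j ⪯ 2 I` in quadratic-form form. -/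
theorem stmt_1 (d n : ℕ) (hd : 1 ≤ d) (hn : 1 ≤ n) (lam : ℝ) (hlam : 0 < lam)
    (l : Fin n → Fin n → ℝ) (hl : ∀ k, 0 < l k k) (j : Fin n)
    (hsum : ∑ k ∈ Finset.univ.erase j, (l j k) ^ 2 / (l j j * l k k) ≤ 1)
    (B : Fin n → Matrix (Fin d) (Fin d) ℝ)
    (hB : ∀ k, (B k - (lam * l k k) • (1 : Matrix (Fin d) (Fin d) ℝ)).PosSemidef)
    (Γ : Matrix (Fin d) (Fin d) ℝ)
    (hΓ : Γ = B j + lam ^ 2 • ∑ k ∈ Finset.univ.erase j, (l j k) ^ 2 • (B k)⁻¹)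
    (y : Fin d → ℝ) :
    y ⬝ᵥ ((B j)⁻¹ * Γ * (B j)⁻¹).mulVec y ≤ 2 * (y ⬝ᵥ (B j)⁻¹.mulVec y) := by
  have hBpd : ∀ k, (B k).PosDef := fun k =>
    posdef_of_ge d _ (mul_pos hlam (hl k)) _ (hB k)
  have hdet : IsUnit (B j).det := (hBpd j).det_pos.ne'.isUnit
  have hherm : ((B j)⁻¹).IsHermitian := (hBpd j).isHermitian.inv
  have htr : ((B j)⁻¹)ᵀ = (B j)⁻¹ := by
    have h := hherm
    rw [Matrix.IsHermitian] at h
    simpa using h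
  set x : Fin d → ℝ := (B j)⁻¹.mulVec y with hx
  have h1 : y ⬝ᵥ ((B j)⁻¹ * Γ * (B j)⁻¹).mulVec y = x ⬝ᵥ Γ.mulVec x := by
    rw [← Matrix.mulVec_mulVec, ← Matrix.mulVec_mulVec, Matrix.dotProduct_mulVec,
      ← htr, Matrix.vecMul_transpose, htr]
  have hBx : (B j).mulVec x = y := by
    rw [hx, Matrix.mulVec_mulVec, Matrix.mul_nonsing_inv _ hdet, Matrix.one_mulVec]
  have h3 : x ⬝ᵥ (B j).mulVec x = y ⬝ᵥ (B j)⁻¹.mulVec y := by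
    rw [hBx, ← hx, dotProduct_comm]
  set S : ℝ := x ⬝ᵥ x with hS
  have hS0 : 0 ≤ S := by
    rw [hS, show x ⬝ᵥ x = ∑ i, x i ^ 2 by simp [dotProduct, sq]]
    positivity
  have hterm : ∀ k ∈ Finset.univ.erase j,
      (l j k) ^ 2 * (x ⬝ᵥ (B k)⁻¹.mulVec x) ≤
      (l j k) ^ 2 / (l j j * l k k) * (l j j / lam) * S := by
    intro k _
    have h := inv_quad_le d (lam * l k k) (mul_pos hlam (hl k)) (B k) (hB k) x
    have e : (l j k) ^ 2 / (l j j * l k k) * (l j j / lam) =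
        (l j k) ^ 2 * (lam * l k k)⁻¹ := by
      field_simp [(hl j).ne', (hl k).ne', hlam.ne']
    rw [e]
    rw [mul_assoc]
    exact mul_le_mul_of_nonneg_left h (sq_nonneg _)
  have hsum2 : ∑ k ∈ Finset.univ.erase j, (l j k) ^ 2 * (x ⬝ᵥ (B k)⁻¹.mulVec x) ≤
      lam⁻¹ * l j j * S := by
    calc ∑ k ∈ Finset.univ.erase j, (l j k) ^ 2 * (x ⬝ᵥ (B k)⁻¹.mulVec x)
        ≤ ∑ k ∈ Finset.univ.erase j, (l j k) ^ 2 / (l j j * l k k) * (l j j / lam) * S :=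
          Finset.sum_le_sum hterm
      _ = (∑ k ∈ Finset.univ.erase j, (l j k) ^ 2 / (l j j * l k k)) * (l j j / lam) * S := by
          rw [← Finset.sum_mul, ← Finset.sum_mul]
      _ ≤ 1 * (l j j / lam) * S :=
          mul_le_mul_of_nonneg_right
            (mul_le_mul_of_nonneg_right hsum (div_nonneg (hl j).le hlam.le)) hS0
      _ = lam⁻¹ * l j j * S := by rw [one_mul, div_eq_mul_inv]; ring
  have hquad : lam * l j j * S ≤ x ⬝ᵥ (B j).mulVec x := quad_ge d _ _ (hB j) x
  have h2 : x ⬝ᵥ Γ.mulVec x ≤ 2 * (x ⬝ᵥ (B j).mulVec x) := by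
    rw [hΓ, Matrix.add_mulVec, dotProduct_add, Matrix.smul_mulVec,
      dotProduct_smul]
    have e2 : (∑ k ∈ Finset.univ.erase j, (l j k) ^ 2 • (B k)⁻¹).mulVec x =
        ∑ k ∈ Finset.univ.erase j, (l j k) ^ 2 • ((B k)⁻¹.mulVec x) := by
      have := map_sum (Matrix.mulVec.addMonoidHomLeft x)
        (fun k => (l j k) ^ 2 • (B k)⁻¹) (Finset.univ.erase j)
      simpa [Matrix.mulVec.addMonoidHomLeft, Matrix.smul_mulVec] using this
    have e4 : x ⬝ᵥ (∑ k ∈ Finset.univ.erase j, (l j k) ^ 2 • ((B k)⁻¹.mulVec x)) =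
        ∑ k ∈ Finset.univ.erase j, x ⬝ᵥ ((l j k) ^ 2 • ((B k)⁻¹.mulVec x)) := by
      simp only [dotProduct, Finset.sum_apply, Pi.smul_apply, smul_eq_mul,
        Finset.mul_sum]
      exact Finset.sum_comm
    rw [e2, e4]
    have e3 : ∀ k, x ⬝ᵥ ((l j k) ^ 2 • ((B k)⁻¹.mulVec x)) =
        (l j k) ^ 2 * (x ⬝ᵥ (B k)⁻¹.mulVec x) := by
      intro k; simp [dotProduct_smul]
    simp only [e3, smul_eq_mul]
    have : lam ^ 2 * (lam⁻¹ * l j j * S) = lam * l j j * S := by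
      field_simp
    nlinarith [mul_le_mul_of_nonneg_left hsum2 (by positivity : (0:ℝ) ≤ lam ^ 2)]
  calc y ⬝ᵥ ((B j)⁻¹ * Γ * (B j)⁻¹).mulVec y = x ⬝ᵥ Γ.mulVec x := h1
    _ ≤ 2 * (x ⬝ᵥ (B j).mulVec x) := h2
    _ = 2 * (y ⬝ᵥ (B j)⁻¹.mulVec y) := by rw [h3]
end

section
/- Consider the multi-user deterministic setup: integers d, n ≥ 1, a real λ > 0, real numbers l_{jk} (1 ≤ j,k ≤ n) with l_{kk} > 0 for all k; for each user k a finite index set T_k and, for each τ ∈ T_k, vectors b_{k,τ}, b̄_{k,τ} ∈ ℝ^d, reals ν_{k,τ}, η_{k,τ}, and a symmetric positive semidefinite matrix E_{k,τ} ∈ ℝ^{d×d}; and vectors μ_1,…,μ_n ∈ ℝ^d. Define X_{k,τ} = b_{k,τ} − b̄_{k,τ}, r_{k,τ} = ν_{k,τ} + b_{k,τ}ᵀ μ_k + η_{k,τ}, B_k = Σ_{τ∈T_k}(X_{k,τ} X_{k,τ}ᵀ + E_{k,τ}) + λ l_{kk} I_d (positive definite), μ̄_k = B_k^{-1} Σ_{τ∈T_k}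 2 X_{k,τ} r_{k,τ}, A_k = (Σ_{τ∈T_k}(X_{k,τ} X_{k,τ}ᵀ − E_{k,τ})) μ_k + Σ_{τ∈T_k} 2 X_{k,τ}(ν_{k,τ} + b̄_{k,τ}ᵀ μ_k), and for a fixed user j, μ̂_j = μ̄_j − λ B_j^{-1} Σ_{k≠j} l_{jk} μ̄_k. Then μ̂_j − μ_j = B_j^{-1} [ −λ Σ_{k=1}^n l_{jk} μ_k + λ² Σ_{k≠j} l_{jk} l_{kk} B_k^{-1} μ_k + Σ_{τ∈T_j} 2 X_{j,τ} η_{j,τ} − λ Σ_{k≠j} l_{jk} B_k^{-1} Σ_{τ∈T_k} 2 X_{k,τ} η_{k,τ} + A_j − λ Σ_{k≠j} l_{jk} B_k^{-1} A_k ]. -/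
open Matrix Finset

lemma aux_vmv {d : ℕ} (w v u : Fin d → ℝ) : vecMulVec w v *ᵥ u = (v ⬝ᵥ u) • w := by
  ext i
  simp only [mulVec, dotProduct, vecMulVec_apply, Pi.smul_apply, smul_eq_mul, Finset.sum_mul]
  exact Finset.sum_congr rfl fun j _ => by ring

lemma aux_sum_mulVec {d : ℕ} {ι : Type*} (s : Finset ι) (f : ι → Matrix (Fin d) (Fin d) ℝ)
    (v : Fin d → ℝ) : (∑ τ ∈ s, f τ) *ᵥ v = ∑ τ ∈ s, f τ *ᵥ v := by
  ext i
  simp only [mulVec, dotProduct, Matrix.sum_apply, Finset.sum_apply, Finset.sum_mul]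
  rw [Finset.sum_comm]

lemma aux_vv_psd {d : ℕ} (x : Fin d → ℝ) : (vecMulVec x x).PosSemidef := by
  rw [vecMulVec_eq (ι := Unit)]
  have := posSemidef_self_mul_conjTranspose (replicateCol Unit x)
  simpa using this

set_option maxHeartbeats 2000000 in
/-- multi-user decomposition of the graph-adjusted estimator `μ̂_j − μ_j`. -/
theorem stmt_7 (d n : ℕ) (hd : 1 ≤ d) (hn : 1 ≤ n) (lam : ℝ) (hlam : 0 < lam)
    (l : Fin n → Fin n → ℝ) (hl : ∀ k, 0 < l k k)
    {ι : Type*} (T : Fin n → Finset ι)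
    (b bbar : Fin n → ι → Fin d → ℝ) (ν η : Fin n → ι → ℝ)
    (E : Fin n → ι → Matrix (Fin d) (Fin d) ℝ) (hE : ∀ k τ, (E k τ).PosSemidef)
    (μ : Fin n → Fin d → ℝ)
    (X : Fin n → ι → Fin d → ℝ) (hX : ∀ k τ, X k τ = b k τ - bbar k τ)
    (r : Fin n → ι → ℝ) (hr : ∀ k τ, r k τ = ν k τ + b k τ ⬝ᵥ μ k + η k τ)
    (B : Fin n → Matrix (Fin d) (Fin d) ℝ)
    (hB : ∀ k, B k = ∑ τ ∈ T k, (vecMulVec (X k τ) (X k τ) + E k τ) +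
      (lam * l k k) • (1 : Matrix (Fin d) (Fin d) ℝ))
    (mubar : Fin n → Fin d → ℝ)
    (hmubar : ∀ k, mubar k = (B k)⁻¹.mulVec (∑ τ ∈ T k, (2 * r k τ) • X k τ))
    (A : Fin n → Fin d → ℝ)
    (hA : ∀ k, A k = (∑ τ ∈ T k, (vecMulVec (X k τ) (X k τ) - E k τ)).mulVec (μ k) +
      ∑ τ ∈ T k, (2 * (ν k τ + bbar k τ ⬝ᵥ μ k)) • X k τ)
    (j : Fin n) (muhat : Fin d → ℝ)
    (hmuhat : muhat = mubar j -
      lam • (B j)⁻¹.mulVec (∑ k ∈ Finset.univ.erase j, l j k • mubar k)) :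
    muhat - μ j = (B j)⁻¹.mulVec (
      -(lam • ∑ k : Fin n, l j k • μ k)
      + lam ^ 2 • ∑ k ∈ Finset.univ.erase j, (l j k * l k k) • (B k)⁻¹.mulVec (μ k)
      + ∑ τ ∈ T j, (2 * η j τ) • X j τ
      - lam • ∑ k ∈ Finset.univ.erase j,
          l j k • (B k)⁻¹.mulVec (∑ τ ∈ T k, (2 * η k τ) • X k τ)
      + A j
      - lam • ∑ k ∈ Finset.univ.erase j, l j k • (B k)⁻¹.mulVec (A k)) := by
  -- positive definiteness and invertibility of each B k
  have hpd : ∀ k, (B k).PosDef := by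
    intro k
    rw [hB k]
    refine Matrix.PosDef.posSemidef_add ?_ ?_
    · exact Finset.sum_induction _ _ (fun a c ha hc => ha.add hc) Matrix.PosSemidef.zero
        (fun τ _ => (aux_vv_psd (X k τ)).add (hE k τ))
    · rw [Matrix.smul_one_eq_diagonal]
      exact Matrix.PosDef.diagonal fun _ => mul_pos hlam (hl k)
  have hinv : ∀ k, (B k)⁻¹ * B k = 1 := fun k =>
    Matrix.nonsing_inv_mul _ (hpd k).det_pos.ne'.isUnit
  have hcancel : ∀ k (v : Fin d → ℝ), (B k)⁻¹ *ᵥ (B k *ᵥ v) = v := by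
    intro k v
    rw [mulVec_mulVec, hinv k, one_mulVec]
  -- the key per-user identity
  have key : ∀ k, ∑ τ ∈ T k, (2 * r k τ) • X k τ = B k *ᵥ μ k +
      ((-(lam * l k k)) • μ k + (A k + ∑ τ ∈ T k, (2 * η k τ) • X k τ)) := by
    intro k
    rw [hB k, hA k, add_mulVec, aux_sum_mulVec, aux_sum_mulVec, smul_mulVec, one_mulVec]
    have h1 : ∀ τ ∈ T k, (2 * r k τ) • X k τ =
        ((vecMulVec (X k τ) (X k τ) + E k τ) *ᵥ μ k +
          ((vecMulVec (X k τ) (X k τ) - E k τ) *ᵥ μ k +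
            ((2 * (ν k τ + bbar k τ ⬝ᵥ μ k)) • X k τ + (2 * η k τ) • X k τ))) := by
      intro τ _
      rw [add_mulVec, sub_mulVec, aux_vmv, hr k τ, hX k τ]
      ext i
      simp only [Pi.add_apply, Pi.smul_apply, Pi.sub_apply, smul_eq_mul, dotProduct,
        Finset.sum_sub_distrib, sub_mul, mul_sub]
      ring
    rw [Finset.sum_congr rfl h1]
    simp only [Finset.sum_add_distrib]
    module
  -- consequence: formula for mubar
  have hmub : ∀ k, mubar k = μ k + (B k)⁻¹ *ᵥ
      ((-(lam * l k k)) • μ k + (A k + ∑ τ ∈ T k, (2 * η k τ) • X k τ)) := by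
    intro k
    rw [hmubar k, key k, mulVec_add, hcancel]
  -- main computation
  rw [hmuhat, hmub j]
  rw [show ∀ a c e : Fin d → ℝ, a + c - e - a = c - e from fun a c e => by abel]
  conv_lhs => rw [← mulVec_smul, ← mulVec_sub]

  have hsplit : ∑ k : Fin n, l j k • μ k =
      l j j • μ j + ∑ k ∈ Finset.univ.erase j, l j k • μ k :=
    (Finset.add_sum_erase _ _ (Finset.mem_univ j)).symm
  rw [hsplit]
  have hterm : ∀ k ∈ Finset.univ.erase j, l j k • mubar k =
      l j k • μ k + ((-(lam * l k k)) • (l j k • ((B k)⁻¹ *ᵥ μ k)) +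
        (l j k • ((B k)⁻¹ *ᵥ A k) + l j k • ((B k)⁻¹ *ᵥ ∑ τ ∈ T k, (2 * η k τ) • X k τ))) := by
    intro k _
    rw [hmub k]
    simp only [mulVec_add, mulVec_smul, smul_add, smul_smul]
    module
  rw [Finset.sum_congr rfl hterm]
  have E2 : lam ^ 2 • ∑ k ∈ Finset.univ.erase j, (l j k * l k k) • ((B k)⁻¹ *ᵥ μ k)
      = -(lam • ∑ k ∈ Finset.univ.erase j,
          (-(lam * l k k)) • (l j k • ((B k)⁻¹ *ᵥ μ k))) := by
    rw [Finset.smul_sum, Finset.smul_sum, ← Finset.sum_neg_distrib]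
    exact Finset.sum_congr rfl fun k _ => by module
  rw [E2]
  simp only [Finset.sum_add_distrib, smul_add]
  refine congrArg _ ?_
  simp only [smul_smul]
  module
end

section
/- Let d ≥ 1 and T ≥ 0 be integers and let λ > 0 and l > 0 be reals. Let X_1,…,X_T ∈ ℝ^d and let E_1,…,E_T ∈ ℝ^{d×d} be symmetric positive semidefinite matrices. Define B(1) = λ l I_d and B(t+1) = B(t) + X_t X_tᵀ + E_t for t = 1,…,T (each B(t) is positive definite), and s_t = ‖X_t‖_{B(t)^{-1}}. Then log det(B(T+1)) ≥ d log(λ l) + Σ_{t=1}^T log(1 + s_t²). -/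
open Matrix Finset

lemma vmv_psd {d : ℕ} (v : Fin d → ℝ) : (vecMulVec v v).PosSemidef := by
  have h := posSemidef_conjTranspose_mul_self (replicateRow (Fin 1) v)
  rw [conjTranspose_replicateRow, star_trivial] at h; rw [vecMulVec_eq (Fin 1)]; exact h

lemma one_le_det_one_add {n : Type*} [Fintype n] [DecidableEq n]
    {D : Matrix n n ℝ} (hD : D.PosSemidef) : 1 ≤ (1 + D).det := by
  have hM : (1 + D).IsHermitian := isHermitian_one.add hD.1
  rw [hM.det_eq_prod_eigenvalues]
  have h1 : (1:ℝ) = ∏ _i : n, (1:ℝ) := by simp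
  rw [h1]
  refine Finset.prod_le_prod (fun i _ => zero_le_one) fun i _ => ?_
  show (1:ℝ) ≤ (hM.eigenvalues i : ℝ)
  have hv : (WithLp.equiv 2 (n → ℝ)) (hM.eigenvectorBasis i) ⬝ᵥ (WithLp.equiv 2 (n → ℝ)) (hM.eigenvectorBasis i) = 1 := by
    have h1 : ‖hM.eigenvectorBasis i‖ = 1 := hM.eigenvectorBasis.orthonormal.1 i
    have h2 : (inner ℝ (hM.eigenvectorBasis i) (hM.eigenvectorBasis i) : ℝ) = 1 := by
      rw [real_inner_self_eq_norm_sq, h1]; norm_num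
    rw [← h2, EuclideanSpace.inner_eq_star_dotProduct]; simp [dotProduct, mul_comm]
  have := hM.eigenvalues_eq i
  rw [this]
  simp only [RCLike.re_to_real, star_trivial]
  rw [add_mulVec, one_mulVec, dotProduct_add]; rw [WithLp.equiv_apply] at hv; rw [hv]
  have := hD.dotProduct_mulVec_nonneg ((WithLp.equiv 2 (n → ℝ)) (hM.eigenvectorBasis i))
  simp only [star_trivial] at this
  rw [WithLp.equiv_apply] at this
  linarith

open scoped MatrixOrder in
lemma det_le_det_add {n : Type*} [Fintype n] [DecidableEq n]
    {A C : Matrix n n ℝ} (hA : A.PosDef) (hC : C.PosSemidef) :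
    A.det ≤ (A + C).det := by
  set S := CFC.sqrt A with hSdef
  have hS : S.PosSemidef := (CFC.sqrt_nonneg A).posSemidef
  have hSS : S * S = A := CFC.sqrt_mul_sqrt_self A hA.posSemidef.nonneg
  have hdA : 0 < A.det := hA.det_pos
  have hdet : S.det * S.det = A.det := by rw [← det_mul, hSS]
  have hSu : IsUnit S.det := by
    refine isUnit_iff_ne_zero.mpr fun h => ?_
    rw [h, mul_zero] at hdet; exact hdA.ne' hdet.symm
  have h1 : S * S⁻¹ = 1 := mul_nonsing_inv _ hSu
  have h2 : S⁻¹ * S = 1 := nonsing_inv_mul _ hSu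
  have hD : (S⁻¹ * C * S⁻¹).PosSemidef := by
    have h := hC.conjTranspose_mul_mul_same S⁻¹
    rwa [hS.1.inv.eq] at h
  have key : A + C = S * (1 + S⁻¹ * C * S⁻¹) * S := by
    rw [Matrix.mul_add, Matrix.mul_one, Matrix.add_mul, hSS]
    congr 1
    symm
    calc S * (S⁻¹ * C * S⁻¹) * S = S * S⁻¹ * C * (S⁻¹ * S) := by
          simp only [Matrix.mul_assoc]
      _ = C := by rw [h1, h2, Matrix.one_mul, Matrix.mul_one]
  have hle := one_le_det_one_add hD
  calc A.det = A.det * 1 := (mul_one _).symm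
    _ ≤ A.det * (1 + S⁻¹ * C * S⁻¹).det := by
        exact mul_le_mul_of_nonneg_left hle hdA.le
    _ = (A + C).det := by
        rw [key, det_mul, det_mul, mul_comm, ← hdet]; ring

lemma det_add_vmv {n : Type*} [Fintype n] [DecidableEq n]
    {M : Matrix n n ℝ} (hM : M.PosDef) (v : n → ℝ) :
    (M + vecMulVec v v).det = M.det * (1 + v ⬝ᵥ M⁻¹ *ᵥ v) := by
  rw [vecMulVec_eq (Fin 1), det_add_mul _ _ hM.det_pos.ne'.isUnit]
  congr 1
  rw [det_unique, ← replicateRow_vecMul, Matrix.add_apply, Matrix.one_apply_eq, replicateRow_mul_replicateCol_apply,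
    dotProduct_mulVec]

/-- log-determinant lower bound (design-matrix recursion, 0-indexed:
`B 0 = λ l I`, `B (t+1) = B t + X_t X_tᵀ + E_t` for `t = 0, …, T-1`). -/
theorem stmt_10 (d T : ℕ) (hd : 1 ≤ d) (lam l : ℝ) (hlam : 0 < lam) (hl : 0 < l)
    (X : ℕ → Fin d → ℝ) (E : ℕ → Matrix (Fin d) (Fin d) ℝ) (hE : ∀ t, (E t).PosSemidef)
    (B : ℕ → Matrix (Fin d) (Fin d) ℝ)
    (hB0 : B 0 = (lam * l) • (1 : Matrix (Fin d) (Fin d) ℝ))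
    (hBs : ∀ t, B (t + 1) = B t + vecMulVec (X t) (X t) + E t)
    (s : ℕ → ℝ) (hs : ∀ t, s t = Real.sqrt (X t ⬝ᵥ (B t)⁻¹.mulVec (X t))) :
    (d : ℝ) * Real.log (lam * l) + ∑ t ∈ Finset.range T, Real.log (1 + s t ^ 2) ≤
      Real.log (B T).det := by
  have hBpos : ∀ t, (B t).PosDef := by
    intro t
    induction t with
    | zero =>
      rw [hB0, smul_one_eq_diagonal]
      exact posDef_diagonal_iff.mpr fun i => mul_pos hlam hl
    | succ t ih =>
      rw [hBs t]
      exact (ih.add_posSemidef (vmv_psd (X t))).add_posSemidef (hE t)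
  induction T with
  | zero =>
    rw [hB0, smul_one_eq_diagonal, det_diagonal, Finset.prod_const, Finset.card_univ,
      Fintype.card_fin, Finset.range_zero, Finset.sum_empty, add_zero, Real.log_pow]
  | succ T ih =>
    rw [Finset.sum_range_succ, ← add_assoc]
    have hq0 : 0 ≤ X T ⬝ᵥ (B T)⁻¹ *ᵥ X T := by
      have h := ((hBpos T).inv).posSemidef.dotProduct_mulVec_nonneg (X T)
      simpa using h
    have hsq : s T ^ 2 = X T ⬝ᵥ (B T)⁻¹ *ᵥ X T := by rw [hs T]; exact Real.sq_sqrt hq0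
    have hdet1 : (B T + vecMulVec (X T) (X T)).det
        = (B T).det * (1 + X T ⬝ᵥ (B T)⁻¹ *ᵥ X T) := det_add_vmv (hBpos T) (X T)
    have hle : (B T + vecMulVec (X T) (X T)).det ≤ (B (T + 1)).det := by
      rw [hBs T]
      exact det_le_det_add ((hBpos T).add_posSemidef (vmv_psd (X T))) (hE T)
    have hpos1 : 0 < (B T).det := (hBpos T).det_pos
    have hpos2 : 0 < 1 + s T ^ 2 := by rw [hsq]; linarith
    calc (d : ℝ) * Real.log (lam * l) + ∑ t ∈ Finset.range T, Real.log (1 + s t ^ 2)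
          + Real.log (1 + s T ^ 2)
        ≤ Real.log (B T).det + Real.log (1 + s T ^ 2) := add_le_add_left ih _
      _ = Real.log ((B T).det * (1 + s T ^ 2)) :=
          (Real.log_mul hpos1.ne' hpos2.ne').symm
      _ = Real.log (B T + vecMulVec (X T) (X T)).det := by rw [hdet1, hsq]
      _ ≤ Real.log (B (T + 1)).det :=
          Real.log_le_log (by rw [hdet1]; positivity) hle
end

section
/- Let d ≥ 1 and T ≥ 1 be integers and let λ > 0 be a real. Let X_1,…,X_T ∈ ℝ^d satisfy ‖X_t‖₂ ≤ 2 for all t, and let E_1,…,E_T ∈ ℝ^{d×d} be symmetric positive semidefinite matrices with trace(E_t) ≤ 4 for all t. Define B(1) = λ I_d and B(t+1) = B(t) + X_t X_tᵀ + E_t for t = 1,…,T, and s_t = ‖X_t‖_{B(t)^{-1}}. Then Σ_{t=1}^T s_t ≤ √( (4 d T / (λ log(1 + 4/λ))) · log(1 + 8T/(d λ)) ). -/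
open Matrix Finset

open Matrix Finset
set_option linter.unusedSectionVars false


variable {n : Type*} [Fintype n] [DecidableEq n]

lemma psd_dot {N : Matrix n n ℝ} (hN : N.PosSemidef) (x : n → ℝ) :
    0 ≤ x ⬝ᵥ N *ᵥ x := by simpa using hN.dotProduct_mulVec_nonneg x

lemma vecMulVec_posSemidef (x : n → ℝ) : (vecMulVec x x).PosSemidef := by
  have h : vecMulVec x x = replicateCol Unit x * (replicateCol Unit x)ᴴ := by
    ext i j
    simp [vecMulVec_apply, mul_apply, conjTranspose_apply, replicateCol]
  rw [h]
  exact posSemidef_self_mul_conjTranspose _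

lemma trace_vecMulVec (x : n → ℝ) : (vecMulVec x x).trace = x ⬝ᵥ x := by
  simp [Matrix.trace, vecMulVec_apply, dotProduct, Matrix.diag]

lemma trace_eq_sum_eigenvalues {A : Matrix n n ℝ} (hA : A.IsHermitian) :
    A.trace = ∑ i, hA.eigenvalues i := by
  simpa using hA.trace_eq_sum_eigenvalues



variable {n : Type*} [Fintype n] [DecidableEq n]

lemma one_le_det_one_add_psd {N : Matrix n n ℝ} (hN : N.PosSemidef) :
    1 ≤ (1 + N).det := by
  have h1 : (1 + N).PosSemidef := Matrix.PosSemidef.add (Matrix.PosSemidef.one) hN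
  have hH : (1 + N).IsHermitian := h1.1
  have hdet : (1 + N).det = ∏ i, hH.eigenvalues i := by
    simpa using hH.det_eq_prod_eigenvalues
  rw [hdet]
  have key : ∀ i, 1 ≤ hH.eigenvalues i := by
    intro i
    have hev := hH.eigenvalues_eq i
    set v := hH.eigenvectorBasis i with hv
    have hnorm : ‖v‖ = 1 := hH.eigenvectorBasis.orthonormal.1 i
    have hvv : (⇑v) ⬝ᵥ (⇑v) = 1 := by
      have := EuclideanSpace.inner_eq_star_dotProduct v v
      have h2 : (inner ℝ v v : ℝ) = 1 := by
        rw [real_inner_self_eq_norm_sq, hnorm]; norm_num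
      rw [this] at h2
      simpa using h2
    rw [hev]
    have heq : (star ⇑v) ⬝ᵥ ((1 + N) *ᵥ ⇑v) = (⇑v) ⬝ᵥ (⇑v) + (⇑v) ⬝ᵥ (N *ᵥ ⇑v) := by
      simp [Matrix.add_mulVec, Matrix.one_mulVec, dotProduct_add]
    simp only [RCLike.re_to_real, heq, hvv]
    have := psd_dot hN (⇑v)
    linarith
  calc (1:ℝ) = ∏ _i : n, (1:ℝ) := by simp
    _ ≤ ∏ i, hH.eigenvalues i :=
        Finset.prod_le_prod (fun i _ => zero_le_one) (fun i _ => key i)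

lemma det_le_trace_div_pow {A : Matrix n n ℝ} (hA : A.PosSemidef)
    (hcard : 0 < Fintype.card n) :
    A.det ≤ (A.trace / (Fintype.card n)) ^ (Fintype.card n) := by
  set d : ℕ := Fintype.card n with hd
  have hμ : ∀ i, 0 ≤ hA.1.eigenvalues i := fun i => hA.eigenvalues_nonneg i
  have hdet : A.det = ∏ i, hA.1.eigenvalues i := by
    simpa using hA.1.det_eq_prod_eigenvalues
  have htr : A.trace = ∑ i, hA.1.eigenvalues i := trace_eq_sum_eigenvalues hA.1
  have hdne : (d : ℝ) ≠ 0 := Nat.cast_ne_zero.mpr hcard.ne'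
  have hamgm := Real.geom_mean_le_arith_mean_weighted Finset.univ
    (fun _ => 1 / (d : ℝ)) hA.1.eigenvalues
    (fun i _ => by positivity)
    (by simp [Finset.card_univ, ← hd, mul_comm]; field_simp)
    (fun i _ => hμ i)
  have hprod : (∏ i, hA.1.eigenvalues i ^ (1 / (d : ℝ))) ^ d = ∏ i, hA.1.eigenvalues i := by
    rw [← Finset.prod_pow]
    refine Finset.prod_congr rfl fun i _ => ?_
    rw [← Real.rpow_natCast (hA.1.eigenvalues i ^ (1 / (d : ℝ))) d,
      ← Real.rpow_mul (hμ i)]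
    field_simp
    simp
  have hsum : ∑ i, (1 / (d : ℝ)) * hA.1.eigenvalues i = A.trace / d := by
    rw [htr, Finset.sum_div]
    exact Finset.sum_congr rfl fun i _ => by field_simp
  rw [hdet, ← hprod]
  have h0 : 0 ≤ ∏ i, hA.1.eigenvalues i ^ (1 / (d : ℝ)) :=
    Finset.prod_nonneg fun i _ => Real.rpow_nonneg (hμ i) _
  calc (∏ i, hA.1.eigenvalues i ^ (1 / (d : ℝ))) ^ d
      ≤ (∑ i, (1 / (d : ℝ)) * hA.1.eigenvalues i) ^ d := pow_le_pow_left₀ h0 hamgm d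
    _ = (A.trace / d) ^ d := by rw [hsum]

open scoped MatrixOrder in
lemma det_add_psd_le {A E : Matrix n n ℝ} (hA : A.PosDef) (hE : E.PosSemidef) :
    A.det ≤ (A + E).det := by
  set S := CFC.sqrt A with hSdef
  have hS : S.PosSemidef := (CFC.sqrt_nonneg A).posSemidef
  have hSS : S * S = A := CFC.sqrt_mul_sqrt_self A hA.posSemidef.nonneg
  have hdetS : S.det * S.det = A.det := by rw [← det_mul, hSS]
  have hAdet : 0 < A.det := hA.det_pos
  have hSdet : S.det ≠ 0 := by
    intro h; rw [h, mul_zero] at hdetS; exact absurd hdetS.symm hAdet.ne'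
  have hSunit : IsUnit S.det := isUnit_iff_ne_zero.mpr hSdet
  have hSinv : S * S⁻¹ = 1 := mul_nonsing_inv _ hSunit
  have hSinv' : S⁻¹ * S = 1 := nonsing_inv_mul _ hSunit
  have hSh : Sᴴ = S := hS.1
  have hN : (S⁻¹ * E * S⁻¹).PosSemidef := by
    have := hE.conjTranspose_mul_mul_same (B := S⁻¹)
    rwa [conjTranspose_nonsing_inv, hSh] at this
  have hdecomp : S * (1 + S⁻¹ * E * S⁻¹) * S = A + E := by
    rw [Matrix.mul_add, Matrix.mul_one, Matrix.add_mul, hSS]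
    congr 1
    simp only [← Matrix.mul_assoc]
    rw [hSinv, Matrix.one_mul, Matrix.mul_assoc, hSinv', Matrix.mul_one]
  have h1 : 1 ≤ (1 + S⁻¹ * E * S⁻¹).det := one_le_det_one_add_psd hN
  calc A.det = A.det * 1 := (mul_one _).symm
    _ ≤ A.det * (1 + S⁻¹ * E * S⁻¹).det := by
        exact mul_le_mul_of_nonneg_left h1 hAdet.le
    _ = (A + E).det := by
        rw [← hdecomp, det_mul, det_mul]
        simp only [Matrix.mul_assoc]
        linear_combination (-(1 + S⁻¹ * (E * S⁻¹)).det) * hdetS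

lemma det_add_vecMulVec {Bm : Matrix n n ℝ} (hB : Bm.PosDef) (x : n → ℝ) :
    (Bm + vecMulVec x x).det = Bm.det * (1 + x ⬝ᵥ Bm⁻¹ *ᵥ x) := by
  have hdet : IsUnit Bm.det := isUnit_iff_ne_zero.mpr hB.det_pos.ne'
  have h : vecMulVec x x = replicateCol Unit x * replicateRow Unit x := by
    ext i j
    simp [vecMulVec_apply, mul_apply]
  rw [h, Matrix.det_add_replicateCol_mul_replicateRow hdet]
  congr 1
  rw [det_unique]
  simp [Matrix.mul_apply, Matrix.mulVec, dotProduct, Matrix.one_apply, Finset.mul_sum,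
    Finset.sum_mul]
  rw [Finset.sum_comm]
  exact Finset.sum_congr rfl fun i _ => Finset.sum_congr rfl fun j _ => by ring

lemma log_lin_bound {M x : ℝ} (hM : 0 < M) (hx0 : 0 ≤ x) (hxM : x ≤ M) :
    x * Real.log (1 + M) ≤ M * Real.log (1 + x) := by
  have hcc := strictConcaveOn_log_Ioi.concaveOn
  have ha : (0:ℝ) ≤ 1 - x / M := by
    have : x / M ≤ 1 := (div_le_one hM).mpr hxM
    linarith
  have hb : (0:ℝ) ≤ x / M := div_nonneg hx0 hM.le
  have hab : (1 - x / M) + x / M = 1 := by ring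
  have h1 : (1:ℝ) ∈ Set.Ioi (0:ℝ) := by norm_num
  have h2 : (1 + M) ∈ Set.Ioi (0:ℝ) := by simp; linarith
  have := hcc.2 h1 h2 ha hb hab
  have hpt : (1 - x / M) • (1:ℝ) + (x / M) • (1 + M) = 1 + x := by
    field_simp
    rw [smul_eq_mul, smul_eq_mul, div_mul_eq_mul_div, div_mul_eq_mul_div, ← add_div,
      div_eq_iff hM.ne']
    ring
  rw [hpt, Real.log_one] at this
  have : (x / M) * Real.log (1 + M) ≤ Real.log (1 + x) := by
    simpa using this
  calc x * Real.log (1 + M) = M * ((x / M) * Real.log (1 + M)) := by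
        field_simp
    _ ≤ M * Real.log (1 + x) := mul_le_mul_of_nonneg_left this hM.le


/-- deterministic elliptical-potential bound
`Σ_t s_t ≤ √( (4dT/(λ log(1+4/λ))) log(1 + 8T/(dλ)) )` (0-indexed recursion). -/
theorem stmt_13 (d T : ℕ) (hd : 1 ≤ d) (hT : 1 ≤ T) (lam : ℝ) (hlam : 0 < lam)
    (X : ℕ → Fin d → ℝ) (hX : ∀ t, Real.sqrt (X t ⬝ᵥ X t) ≤ 2)
    (E : ℕ → Matrix (Fin d) (Fin d) ℝ) (hE : ∀ t, (E t).PosSemidef)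
    (htr : ∀ t, (E t).trace ≤ 4)
    (B : ℕ → Matrix (Fin d) (Fin d) ℝ)
    (hB0 : B 0 = lam • (1 : Matrix (Fin d) (Fin d) ℝ))
    (hBs : ∀ t, B (t + 1) = B t + vecMulVec (X t) (X t) + E t)
    (s : ℕ → ℝ) (hs : ∀ t, s t = Real.sqrt (X t ⬝ᵥ (B t)⁻¹.mulVec (X t))) :
    ∑ t ∈ Finset.range T, s t ≤
      Real.sqrt ((4 * d * T / (lam * Real.log (1 + 4 / lam))) *
        Real.log (1 + 8 * T / (d * lam))) := by
  have hd' : (0:ℝ) < d := by exact_mod_cast hd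
  have hT' : (0:ℝ) < T := by exact_mod_cast hT
  set M : ℝ := 4 / lam with hMdef
  have hM0 : 0 < M := by positivity
  have hlog1 : 0 < Real.log (1 + M) := Real.log_pos (by linarith)
  set a : ℕ → ℝ := fun t => X t ⬝ᵥ (B t)⁻¹ *ᵥ X t with hadef
  -- positivity properties of B
  have hBpd : ∀ t, (B t).PosDef ∧ ((B t) - lam • 1).PosSemidef := by
    intro t
    induction t with
    | zero =>
      refine ⟨?_, ?_⟩
      · rw [hB0, smul_one_eq_diagonal]
        exact Matrix.PosDef.diagonal (fun _ => hlam)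
      · rw [hB0, sub_self]
        exact Matrix.PosSemidef.zero
    | succ t ih =>
      obtain ⟨h1, h2⟩ := ih
      have hV := vecMulVec_posSemidef (X t)
      refine ⟨?_, ?_⟩
      · rw [hBs t]
        exact (h1.add_posSemidef hV).add_posSemidef (hE t)
      · have heq : B (t+1) - lam • 1
            = (B t - lam • 1) + (vecMulVec (X t) (X t) + E t) := by
          rw [hBs t]; abel
        rw [heq]
        exact h2.add (hV.add (hE t))
  -- bounds on ‖X t‖²
  have hXX : ∀ t, 0 ≤ X t ⬝ᵥ X t ∧ X t ⬝ᵥ X t ≤ 4 := by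
    intro t
    have h0 : 0 ≤ X t ⬝ᵥ X t := by
      simp only [dotProduct]
      exact Finset.sum_nonneg fun i _ => mul_self_nonneg _
    refine ⟨h0, ?_⟩
    nlinarith [Real.sq_sqrt h0, Real.sqrt_nonneg (X t ⬝ᵥ X t), hX t]
  -- bounds on a t
  have haB : ∀ t, 0 ≤ a t ∧ a t ≤ M := by
    intro t
    obtain ⟨hpd, hpsd⟩ := hBpd t
    set y := (B t)⁻¹ *ᵥ X t with hy
    have hBy : B t *ᵥ y = X t := by
      rw [hy, mulVec_mulVec, mul_nonsing_inv _ (isUnit_iff_ne_zero.mpr hpd.det_pos.ne'),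
        one_mulVec]
    have hq0 : 0 ≤ y ⬝ᵥ y := by
      simp only [dotProduct]
      exact Finset.sum_nonneg fun i _ => mul_self_nonneg _
    have hlow : lam * (y ⬝ᵥ y) ≤ a t := by
      have hp := psd_dot hpsd y
      have heq : y ⬝ᵥ ((B t - lam • 1) *ᵥ y) = y ⬝ᵥ (B t *ᵥ y) - lam * (y ⬝ᵥ y) := by
        rw [Matrix.sub_mulVec, dotProduct_sub]
        congr 1
        rw [Matrix.smul_mulVec, Matrix.one_mulVec, dotProduct_smul, smul_eq_mul]
      rw [heq, hBy] at hp
      have hcomm : y ⬝ᵥ X t = a t := dotProduct_comm _ _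
      linarith
    have hcs : (a t)^2 ≤ (X t ⬝ᵥ X t) * (y ⬝ᵥ y) := by
      have h := Finset.sum_mul_sq_le_sq_mul_sq Finset.univ (X t) y
      have hat : a t = X t ⬝ᵥ y := rfl
      rw [hat]
      simpa [dotProduct, sq, mul_pow] using h
    obtain ⟨hX0, hX4⟩ := hXX t
    have h0a : 0 ≤ a t := le_trans (by positivity) hlow
    refine ⟨h0a, ?_⟩
    rcases h0a.eq_or_lt with h | h
    · rw [← h]; exact hM0.le
    · rw [hMdef, le_div_iff₀ hlam]
      nlinarith [hcs, hlow, hq0, hX4, h]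
  -- determinant recursion
  have hdetstep : ∀ t, (B t).det * (1 + a t) ≤ (B (t+1)).det := by
    intro t
    have hpd := (hBpd t).1
    have hpdV : (B t + vecMulVec (X t) (X t)).PosDef :=
      hpd.add_posSemidef (vecMulVec_posSemidef (X t))
    have h1 : (B t + vecMulVec (X t) (X t)).det = (B t).det * (1 + a t) :=
      det_add_vecMulVec hpd (X t)
    have h2 : (B t + vecMulVec (X t) (X t)).det ≤ (B (t+1)).det := by
      rw [hBs t]
      exact det_add_psd_le hpdV (hE t)
    rw [h1] at h2
    exact h2
  -- telescoping
  have htel : ∀ m, (B 0).det * ∏ t ∈ Finset.range m, (1 + a t) ≤ (B m).det := by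
    intro m
    induction m with
    | zero => simp
    | succ m ih =>
      rw [Finset.prod_range_succ, ← mul_assoc]
      have h1a : (0:ℝ) ≤ 1 + a m := by linarith [(haB m).1]
      calc (B 0).det * (∏ t ∈ Finset.range m, (1 + a t)) * (1 + a m)
          ≤ (B m).det * (1 + a m) := mul_le_mul_of_nonneg_right ih h1a
        _ ≤ (B (m+1)).det := hdetstep m
  have hdetB0 : (B 0).det = lam ^ d := by
    rw [hB0, det_smul, det_one, mul_one, Fintype.card_fin]
  -- trace bound
  have htrace : ∀ m, (B m).trace ≤ d * lam + 8 * m := by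
    intro m
    induction m with
    | zero =>
      rw [hB0, trace_smul, trace_one, Fintype.card_fin]
      simp [smul_eq_mul, mul_comm]
    | succ m ih =>
      rw [hBs m, trace_add, trace_add, _root_.trace_vecMulVec]
      have := (hXX m).2
      have := htr m
      push_cast
      linarith
  -- upper bound on det
  have hup : (B T).det ≤ (lam + 8 * T / d) ^ d := by
    have h1 := det_le_trace_div_pow (hBpd T).1.posSemidef
      (by rw [Fintype.card_fin]; omega)
    rw [Fintype.card_fin] at h1
    refine h1.trans ?_
    have htr0 : 0 ≤ (B T).trace := by
      have h := (hBpd T).1.posSemidef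
      rw [trace_eq_sum_eigenvalues h.1]
      exact Finset.sum_nonneg fun i _ => h.eigenvalues_nonneg i
    apply pow_le_pow_left₀ (by positivity)
    rw [div_le_iff₀ hd']
    have := htrace T
    field_simp
    linarith
  -- log bound
  have hprodpos : ∀ t, (0:ℝ) < 1 + a t := fun t => by linarith [(haB t).1]
  have hkey : ∑ t ∈ Finset.range T, Real.log (1 + a t)
      ≤ d * Real.log (1 + 8 * T / (d * lam)) := by
    have hprod : lam ^ d * ∏ t ∈ Finset.range T, (1 + a t) ≤ (lam + 8*T/d)^d := by
      calc lam ^ d * ∏ t ∈ Finset.range T, (1 + a t)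
          = (B 0).det * ∏ t ∈ Finset.range T, (1 + a t) := by rw [hdetB0]
        _ ≤ (B T).det := htel T
        _ ≤ (lam + 8*T/d)^d := hup
    have hP : 0 < ∏ t ∈ Finset.range T, (1 + a t) :=
      Finset.prod_pos fun t _ => hprodpos t
    have h2 : ∏ t ∈ Finset.range T, (1 + a t) ≤ (1 + 8*T/(d*lam))^d := by
      have heq : (1 + 8*T/(d*lam)) = (lam + 8*T/d)/lam := by
        field_simp
      rw [heq, div_pow, le_div_iff₀ (by positivity)]
      calc (∏ t ∈ Finset.range T, (1 + a t)) * lam ^ d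
          = lam ^ d * ∏ t ∈ Finset.range T, (1 + a t) := mul_comm _ _
        _ ≤ (lam + 8*T/d)^d := hprod
    have hlog := Real.log_le_log hP h2
    rw [Real.log_prod (fun t _ => (hprodpos t).ne'), Real.log_pow] at hlog
    exact hlog
  -- sum of a bound
  have hasum : ∑ t ∈ Finset.range T, a t
      ≤ (M / Real.log (1+M)) * (d * Real.log (1 + 8*T/(d*lam))) := by
    have h1 : ∀ t ∈ Finset.range T, a t ≤ (M / Real.log (1+M)) * Real.log (1 + a t) := by
      intro t _
      have hll := log_lin_bound hM0 (haB t).1 (haB t).2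
      rw [div_mul_eq_mul_div, le_div_iff₀ hlog1]
      linarith
    calc ∑ t ∈ Finset.range T, a t
        ≤ ∑ t ∈ Finset.range T, (M / Real.log (1+M)) * Real.log (1 + a t) :=
          Finset.sum_le_sum h1
      _ = (M / Real.log (1+M)) * ∑ t ∈ Finset.range T, Real.log (1 + a t) := by
          rw [Finset.mul_sum]
      _ ≤ (M / Real.log (1+M)) * (d * Real.log (1 + 8*T/(d*lam))) :=
          mul_le_mul_of_nonneg_left hkey (by positivity)
  -- final assembly
  have hssq : ∀ t, s t ^ 2 = a t := fun t => by
    rw [hs t, Real.sq_sqrt (haB t).1]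
  apply Real.le_sqrt_of_sq_le
  calc (∑ t ∈ Finset.range T, s t)^2
      ≤ (Finset.range T).card * ∑ t ∈ Finset.range T, s t ^ 2 :=
        sq_sum_le_card_mul_sum_sq
    _ = T * ∑ t ∈ Finset.range T, a t := by
        rw [Finset.card_range]
        congr 1
        exact Finset.sum_congr rfl fun t _ => hssq t
    _ ≤ T * ((M / Real.log (1+M)) * (d * Real.log (1 + 8*T/(d*lam)))) :=
        mul_le_mul_of_nonneg_left hasum hT'.le
    _ = (4 * d * T / (lam * Real.log (1 + 4 / lam))) * Real.log (1 + 8 * T / (d * lam)) := by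
        rw [hMdef]
        field_simp
end

section
/- Let (Ω, F, P) be a standard Borel probability space with a filtration F_0 ⊆ F_1 ⊆ … ⊆ F_t ⊆ F. For τ = 1,…,t let X_τ : Ω → ℝ^d and c_τ : Ω → ℝ be F_τ-measurable random variables such that: E(X_τ | F_{τ-1}) = 0 almost surely; X_τ and c_τ are conditionally independent given F_{τ-1}; ‖X_τ‖₂ ≤ B almost surely for a constant B; and |c_τ| ≤ 1 almost surely. Then for every u ∈ ℝ^d, E[ exp( uᵀ Σ_{τ=1}^t X_τ c_τ − (1/2) ( Σ_{τ=1}^t (uᵀ X_τ)² + Σ_{τ=1}^t E( (uᵀ X_τ)² | F_{τ-1} ) ) ) ] ≤ 1. -/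
open Matrix MeasureTheory ProbabilityTheory Finset

private lemma aux_deriv (x : ℝ) :
    HasDerivAt (fun y : ℝ => (1 + y + y^2/2) * Real.exp (y^2/2 - y))
      ((x * (x^2/2 + x/2 + 1)) * Real.exp (x^2/2 - x)) x := by
  have h1 : HasDerivAt (fun y : ℝ => 1 + y + y^2/2) (1 + x) x := by
    have := ((hasDerivAt_id x).const_add 1).add (((hasDerivAt_pow 2 x)).div_const 2)
    exact this.congr_deriv (by push_cast; ring)
  have h2 : HasDerivAt (fun y : ℝ => y^2/2 - y) (x - 1) x := by
    have := ((hasDerivAt_pow 2 x).div_const 2).sub (hasDerivAt_id x)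
    exact this.congr_deriv (by push_cast; ring)
  have := h1.mul h2.exp
  exact this.congr_deriv (by ring)

private lemma exp_quad_le (x : ℝ) : Real.exp (x - x^2/2) ≤ 1 + x + x^2/2 := by
  have hpos : ∀ y : ℝ, (0:ℝ) < y^2/2 + y/2 + 1 := by
    intro y; nlinarith [sq_nonneg (y + 1/2)]
  have hcont : Continuous (fun y : ℝ => (1 + y + y^2/2) * Real.exp (y^2/2 - y)) := by
    fun_prop
  have key : 1 ≤ (1 + x + x^2/2) * Real.exp (x^2/2 - x) := by
    rcases le_or_gt 0 x with hx | hx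
    · have hmono : MonotoneOn (fun y : ℝ => (1 + y + y^2/2) * Real.exp (y^2/2 - y)) (Set.Ici 0) := by
        refine monotoneOn_of_deriv_nonneg (convex_Ici 0) hcont.continuousOn
          (fun y hy => (aux_deriv y).differentiableAt.differentiableWithinAt) ?_
        intro y hy
        rw [(aux_deriv y).deriv]
        rw [interior_Ici] at hy
        have : (0:ℝ) < y := hy
        positivity
      have := hmono (Set.self_mem_Ici) (Set.mem_Ici.2 hx) hx
      simpa using this
    · have hanti : AntitoneOn (fun y : ℝ => (1 + y + y^2/2) * Real.exp (y^2/2 - y)) (Set.Iic 0) := by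
        refine antitoneOn_of_deriv_nonpos (convex_Iic 0) hcont.continuousOn
          (fun y hy => (aux_deriv y).differentiableAt.differentiableWithinAt) ?_
        intro y hy
        rw [(aux_deriv y).deriv]
        rw [interior_Iic] at hy
        have hy' : y < 0 := hy
        have := hpos y
        rw [mul_assoc]
        nlinarith [mul_pos (hpos y) (Real.exp_pos (y^2/2 - y))]
      have := hanti (Set.mem_Iic.2 hx.le) (Set.self_mem_Iic) hx.le
      simpa using this
  have h2 : 1 ≤ (1 + x + x^2/2) / Real.exp (x - x^2/2) := by
    rw [show x^2/2 - x = -(x - x^2/2) by ring, Real.exp_neg] at key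
    rw [div_eq_mul_inv]
    exact key
  have := (one_le_div (Real.exp_pos _)).1 h2
  linarith

private lemma exp_convex_bound {a : ℝ} (x : ℝ) (ha : |a| ≤ 1) :
    Real.exp (x * a) ≤ (1 + a)/2 * Real.exp x + (1 - a)/2 * Real.exp (-x) := by
  rw [abs_le] at ha
  have h := convexOn_exp.2 (Set.mem_univ x) (Set.mem_univ (-x))
    (by linarith : (0:ℝ) ≤ (1 + a)/2) (by linarith : (0:ℝ) ≤ (1 - a)/2) (by ring)
  have hx : x * a = (1 + a)/2 * x + (1 - a)/2 * (-x) := by ring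
  rw [hx]
  simpa [smul_eq_mul] using h


private lemma ae_indepFun_condExpKernel {Ω : Type*} {m' : MeasurableSpace Ω}
    [mΩ : MeasurableSpace Ω]
    [StandardBorelSpace Ω] {μ : Measure Ω} [IsProbabilityMeasure μ]
    (hm' : m' ≤ mΩ) {f g : Ω → ℝ}
    (hf : Measurable f) (hg : Measurable g)
    (h : CondIndepFun m' hm' f g μ) :
    ∀ᵐ ω ∂μ, IndepFun f g (condExpKernel μ m' ω) := by
  have h' : ∀ᵐ ω ∂(μ.trim hm'), ∀ (q r : ℚ),
      condExpKernel μ m' ω (f ⁻¹' Set.Iio (q:ℝ) ∩ g ⁻¹' Set.Iio (r:ℝ)) =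
        condExpKernel μ m' ω (f ⁻¹' Set.Iio (q:ℝ)) * condExpKernel μ m' ω (g ⁻¹' Set.Iio (r:ℝ)) := by
    rw [ae_all_iff]
    intro q
    rw [ae_all_iff]
    intro r
    exact h _ _ ⟨Set.Iio (q:ℝ), measurableSet_Iio, rfl⟩ ⟨Set.Iio (r:ℝ), measurableSet_Iio, rfl⟩
  have hae : ∀ᵐ ω ∂μ, ∀ (q r : ℚ),
      condExpKernel μ m' ω (f ⁻¹' Set.Iio (q:ℝ) ∩ g ⁻¹' Set.Iio (r:ℝ)) =
        condExpKernel μ m' ω (f ⁻¹' Set.Iio (q:ℝ)) * condExpKernel μ m' ω (g ⁻¹' Set.Iio (r:ℝ)) :=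
    ae_of_ae_trim hm' h'
  have hR : (inferInstance : MeasurableSpace ℝ) =
      .generateFrom (⋃ a : ℚ, {Set.Iio (a:ℝ)}) :=
    BorelSpace.measurable_eq.trans Real.borel_eq_generateFrom_Iio_rat
  have hcomap : ∀ (φ : Ω → ℝ), MeasurableSpace.comap φ (inferInstance : MeasurableSpace ℝ) =
      .generateFrom (Set.range (fun q : ℚ => φ ⁻¹' Set.Iio (q:ℝ))) := by
    intro φ
    rw [hR, MeasurableSpace.comap_generateFrom]
    congr 1
    ext s
    simp only [Set.mem_image, Set.mem_iUnion, Set.mem_singleton_iff, Set.mem_range]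
    constructor
    · rintro ⟨x, ⟨y, rfl⟩, rfl⟩
      exact ⟨y, rfl⟩
    · rintro ⟨y, rfl⟩
      exact ⟨Set.Iio (y:ℝ), ⟨y, rfl⟩, rfl⟩
  have hpi : ∀ (φ : Ω → ℝ), IsPiSystem (Set.range (fun q : ℚ => φ ⁻¹' Set.Iio (q:ℝ))) := by
    rintro φ _ ⟨q, rfl⟩ _ ⟨r, rfl⟩ -
    refine ⟨min q r, ?_⟩
    rw [← Set.preimage_inter, Set.Iio_inter_Iio]
    push_cast
    rfl
  filter_upwards [hae] with ω hω
  refine IndepSets.indep (hf.comap_le) (hg.comap_le) (hpi f) (hpi g) (hcomap f) (hcomap g) ?_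
  rintro _ _ ⟨q, rfl⟩ ⟨r, rfl⟩
  exact Filter.Eventually.of_forall fun _ => hω q r

private lemma condexp_mul_of_condIndepFun {Ω : Type*} {m' : MeasurableSpace Ω}
    [mΩ : MeasurableSpace Ω]
    [StandardBorelSpace Ω] {μ : Measure Ω} [IsProbabilityMeasure μ]
    (hm' : m' ≤ mΩ) {f g : Ω → ℝ}
    (hf : Measurable f) (hg : Measurable g) (Cf Cg : ℝ)
    (hbf : ∀ ω, |f ω| ≤ Cf) (hbg : ∀ ω, |g ω| ≤ Cg)
    (h : CondIndepFun m' hm' f g μ) :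
    μ[fun ω => f ω * g ω | m'] =ᵐ[μ] fun ω => (μ[f | m']) ω * (μ[g | m']) ω := by
  have hint : ∀ (φ : Ω → ℝ) (C : ℝ), Measurable φ → (∀ ω, |φ ω| ≤ C) →
      ∀ (ν : Measure Ω), IsProbabilityMeasure ν → Integrable φ ν := by
    intro φ C hφ hb ν hν
    exact (integrable_const C).mono hφ.aestronglyMeasurable
      (Filter.Eventually.of_forall fun ω => by
        simpa [Real.norm_eq_abs, abs_of_nonneg (le_trans (abs_nonneg _) (hb ω))] using hb ω)
  have hintμ : Integrable f μ := hint f Cf hf hbf μ inferInstance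
  have hintg : Integrable g μ := hint g Cg hg hbg μ inferInstance
  have hintfg : Integrable (fun ω => f ω * g ω) μ :=
    hintg.bdd_mul (c := Cf) hf.aestronglyMeasurable (Filter.Eventually.of_forall fun ω => by
      simpa [Real.norm_eq_abs] using hbf ω)
  have hk := ae_indepFun_condExpKernel hm' hf hg h
  have h1 := condExp_ae_eq_integral_condExpKernel hm' hintfg
  have h2 := condExp_ae_eq_integral_condExpKernel hm' hintμ
  have h3 := condExp_ae_eq_integral_condExpKernel hm' hintg
  filter_upwards [hk, h1, h2, h3] with ω hω h1ω h2ω h3ω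
  rw [h1ω, h2ω, h3ω]
  have hprob : IsProbabilityMeasure ((condExpKernel μ m') ω) := inferInstance
  exact (show IndepFun f g (condExpKernel μ m' ω) from hω).integral_fun_mul_eq_mul_integral
    (hint f Cf hf hbf _ hprob).aestronglyMeasurable (hint g Cg hg hbg _ hprob).aestronglyMeasurable

set_option maxHeartbeats 4000000 in
private lemma mgf_helper {Ω : Type*} [mΩ : MeasurableSpace Ω] [StandardBorelSpace Ω]
    (P : Measure Ω) [IsProbabilityMeasure P] (ℱ : MeasureTheory.Filtration ℕ mΩ)
    (Z C : ℕ → Ω → ℝ) (K : ℝ) (hK : 0 ≤ K) (t : ℕ)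
    (hZmeas : ∀ τ ∈ Finset.Icc 1 t, Measurable[ℱ τ] (Z τ))
    (hCmeas : ∀ τ ∈ Finset.Icc 1 t, Measurable[ℱ τ] (C τ))
    (hZbdd : ∀ τ ∈ Finset.Icc 1 t, ∀ ω, |Z τ ω| ≤ K)
    (hCbdd : ∀ τ ∈ Finset.Icc 1 t, ∀ ω, |C τ ω| ≤ 1)
    (hZcond : ∀ τ ∈ Finset.Icc 1 t, P[Z τ | ℱ (τ - 1)] =ᵐ[P] 0)
    (hindep : ∀ τ ∈ Finset.Icc 1 t,
      CondIndepFun (ℱ (τ - 1)) (ℱ.le (τ - 1)) (Z τ) (C τ) P) :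
    ∫ ω, Real.exp (∑ τ ∈ Finset.Icc 1 t, (Z τ ω * C τ ω -
      (1/2) * ((Z τ ω)^2 + (P[fun ω' => (Z τ ω')^2 | ℱ (τ - 1)]) ω))) ∂P ≤ 1 := by
  revert hZmeas hCmeas hZbdd hCbdd hZcond hindep
  induction t with
  | zero =>
    intros
    simp
  | succ t ih =>
    intro hZmeas hCmeas hZbdd hCbdd hZcond hindep
    have hsub : Finset.Icc 1 t ⊆ Finset.Icc 1 (t+1) :=
      Finset.Icc_subset_Icc_right (Nat.le_succ t)
    have iht := ih (fun τ hτ => hZmeas τ (hsub hτ)) (fun τ hτ => hCmeas τ (hsub hτ))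
      (fun τ hτ => hZbdd τ (hsub hτ)) (fun τ hτ => hCbdd τ (hsub hτ))
      (fun τ hτ => hZcond τ (hsub hτ)) (fun τ hτ => hindep τ (hsub hτ))
    have hmem : t + 1 ∈ Finset.Icc 1 (t+1) := by simp
    -- notation
    set M : ℕ → Ω → ℝ := fun τ => P[fun ω' => (Z τ ω')^2 | ℱ (τ - 1)] with hM
    set G : Ω → ℝ := fun ω => Real.exp (∑ τ ∈ Finset.Icc 1 t, (Z τ ω * C τ ω -
      (1/2) * ((Z τ ω)^2 + M τ ω))) with hG
    set Y : Ω → ℝ := fun ω => Real.exp (Z (t+1) ω * C (t+1) ω -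
      (1/2) * ((Z (t+1) ω)^2 + M (t+1) ω)) with hY
    have hsplit : ∀ ω, Real.exp (∑ τ ∈ Finset.Icc 1 (t+1), (Z τ ω * C τ ω -
        (1/2) * ((Z τ ω)^2 + M τ ω))) = G ω * Y ω := by
      intro ω
      rw [Finset.sum_Icc_succ_top (by omega), Real.exp_add]
    rw [show (∫ ω, Real.exp (∑ τ ∈ Finset.Icc 1 (t+1), (Z τ ω * C τ ω -
        (1/2) * ((Z τ ω)^2 + (P[fun ω' => (Z τ ω')^2 | ℱ (τ - 1)]) ω))) ∂P)
        = ∫ ω, G ω * Y ω ∂P from integral_congr_ae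
          (Filter.Eventually.of_forall fun ω => hsplit ω)]
    -- basic facts
    have hMnonneg : ∀ τ, 0 ≤ᵐ[P] M τ := fun τ =>
      condExp_nonneg (Filter.Eventually.of_forall fun ω => sq_nonneg _)
    have intOf : ∀ (f : Ω → ℝ) (Cb : ℝ), AEStronglyMeasurable f P →
        (∀ᵐ ω ∂P, |f ω| ≤ Cb) → Integrable f P := by
      intro f Cb hm hb
      refine (integrable_const Cb).mono hm (hb.mono fun ω h => ?_)
      rw [Real.norm_eq_abs]
      exact h.trans (le_abs_self Cb)
    have hGSM : StronglyMeasurable[ℱ t] G := by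
      apply Continuous.comp_stronglyMeasurable Real.continuous_exp
      apply Finset.stronglyMeasurable_fun_sum
      intro τ hτ
      have hτt : τ ≤ t := (Finset.mem_Icc.1 hτ).2
      have hz : StronglyMeasurable[ℱ t] (Z τ) :=
        ((hZmeas τ (hsub hτ)).mono (ℱ.mono hτt) le_rfl).stronglyMeasurable
      have hc : StronglyMeasurable[ℱ t] (C τ) :=
        ((hCmeas τ (hsub hτ)).mono (ℱ.mono hτt) le_rfl).stronglyMeasurable
      have hzsq : StronglyMeasurable[ℱ t] (fun ω => (Z τ ω)^2) :=
        (continuous_pow 2).comp_stronglyMeasurable hz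
      have hm : StronglyMeasurable[ℱ t] (M τ) :=
        stronglyMeasurable_condExp.mono (ℱ.mono (by omega))
      exact (hz.mul hc).sub (stronglyMeasurable_const.mul (hzsq.add hm))
    have hGae : AEStronglyMeasurable G P := (hGSM.mono (ℱ.le t)).aestronglyMeasurable
    have hGbound : ∀ᵐ ω ∂P, |G ω| ≤ Real.exp (t*K) := by
      filter_upwards [ae_all_iff.2 hMnonneg] with ω hω
      simp only [Pi.zero_apply] at hω
      rw [hG, abs_of_pos (Real.exp_pos _), Real.exp_le_exp]
      calc ∑ τ ∈ Finset.Icc 1 t, (Z τ ω * C τ ω - (1/2) * ((Z τ ω)^2 + M τ ω))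
          ≤ ∑ τ ∈ Finset.Icc 1 t, K := by
            refine Finset.sum_le_sum fun τ hτ => ?_
            have h1 : Z τ ω * C τ ω ≤ K := by
              calc Z τ ω * C τ ω ≤ |Z τ ω * C τ ω| := le_abs_self _
              _ = |Z τ ω| * |C τ ω| := abs_mul _ _
              _ ≤ K * 1 := mul_le_mul (hZbdd τ (hsub hτ) ω) (hCbdd τ (hsub hτ) ω)
                  (abs_nonneg _) hK
              _ = K := mul_one K
            nlinarith [sq_nonneg (Z τ ω), hω τ]
        _ = t * K := by
            rw [Finset.sum_const, Nat.card_Icc]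
            simp [nsmul_eq_mul]
      done
    have hGint : Integrable G P := intOf G _ hGae hGbound
    have hGnonneg : ∀ ω, 0 ≤ G ω := fun ω => (Real.exp_pos _).le
    -- facts about step t+1
    have hzK : ∀ ω, |Z (t+1) ω| ≤ K := hZbdd _ hmem
    have hc1 : ∀ ω, |C (t+1) ω| ≤ 1 := hCbdd _ hmem
    have hzmeas : Measurable (Z (t+1)) := (hZmeas _ hmem).mono (ℱ.le _) le_rfl
    have hccmeas : Measurable (C (t+1)) := (hCmeas _ hmem).mono (ℱ.le _) le_rfl
    have hMSM : StronglyMeasurable[ℱ t] (M (t+1)) := stronglyMeasurable_condExp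
    have hYSM : StronglyMeasurable Y := by
      apply Continuous.comp_stronglyMeasurable Real.continuous_exp
      refine ((hzmeas.stronglyMeasurable.mul hccmeas.stronglyMeasurable).sub
        (stronglyMeasurable_const.mul
          (((continuous_pow 2).comp_stronglyMeasurable hzmeas.stronglyMeasurable).add
            (hMSM.mono (ℱ.le t)))))
    have hYbound : ∀ᵐ ω ∂P, |Y ω| ≤ Real.exp K := by
      filter_upwards [hMnonneg (t+1)] with ω hω
      simp only [Pi.zero_apply] at hω
      rw [hY, abs_of_pos (Real.exp_pos _), Real.exp_le_exp]
      have h1 : Z (t+1) ω * C (t+1) ω ≤ K := by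
        calc Z (t+1) ω * C (t+1) ω ≤ |Z (t+1) ω * C (t+1) ω| := le_abs_self _
        _ = |Z (t+1) ω| * |C (t+1) ω| := abs_mul _ _
        _ ≤ K * 1 := mul_le_mul (hzK ω) (hc1 ω) (abs_nonneg _) hK
        _ = K := mul_one K
      nlinarith [sq_nonneg (Z (t+1) ω)]
    have hYint : Integrable Y P := intOf Y _ hYSM.aestronglyMeasurable hYbound
    have hYnonneg : ∀ ω, 0 ≤ Y ω := fun ω => (Real.exp_pos _).le
    have hGYint : Integrable (fun ω => G ω * Y ω) P := by
      refine intOf _ (Real.exp (t*K) * Real.exp K) (hGae.mul hYSM.aestronglyMeasurable) ?_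
      filter_upwards [hGbound, hYbound] with ω h1 h2
      rw [abs_mul]
      exact mul_le_mul h1 h2 (abs_nonneg _) (Real.exp_pos _).le
    -- the conditional mgf bound at step t+1
    have hY1 : P[Y | ℱ t] ≤ᵐ[P] fun _ => (1:ℝ) := by
      have hz0 : P[Z (t+1) | ℱ t] =ᵐ[P] 0 := hZcond _ hmem
      have hindep' : CondIndepFun (ℱ t) (ℱ.le t) (Z (t+1)) (C (t+1)) P := hindep _ hmem
      set z := Z (t+1) with hzdef
      set cc := C (t+1) with hccdef
      have hMrfl : M (t+1) = P[fun ω' => (z ω')^2 | ℱ t] := rfl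
      set W : Ω → ℝ := fun ω => Real.exp (z ω * cc ω - (z ω)^2/2) with hWdef
      set A₁ : Ω → ℝ := fun ω => (1 + cc ω)/2 * Real.exp (z ω - (z ω)^2/2) with hA₁def
      set A₂ : Ω → ℝ := fun ω => (1 - cc ω)/2 * Real.exp (-(z ω) - (z ω)^2/2) with hA₂def
      -- integrability of the pieces
      have hWSM : StronglyMeasurable W :=
        (Real.measurable_exp.comp ((hzmeas.mul hccmeas).sub
          ((hzmeas.pow_const 2).div_const 2))).stronglyMeasurable
      have hWbdd : ∀ ω, |W ω| ≤ Real.exp K := by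
        intro ω
        rw [hWdef, abs_of_pos (Real.exp_pos _), Real.exp_le_exp]
        have h1 : z ω * cc ω ≤ K := by
          calc z ω * cc ω ≤ |z ω * cc ω| := le_abs_self _
          _ = |z ω| * |cc ω| := abs_mul _ _
          _ ≤ K * 1 := mul_le_mul (hzK ω) (hc1 ω) (abs_nonneg _) hK
          _ = K := mul_one K
        nlinarith [sq_nonneg (z ω)]
      have hWint : Integrable W P :=
        intOf W _ hWSM.aestronglyMeasurable (Filter.Eventually.of_forall hWbdd)
      have hzint : Integrable z P :=
        intOf z K hzmeas.aestronglyMeasurable (Filter.Eventually.of_forall hzK)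
      have hzsqint : Integrable (fun ω => (z ω)^2) P := by
        refine intOf _ (K^2) ((hzmeas.pow_const 2).aestronglyMeasurable) ?_
        refine Filter.Eventually.of_forall fun ω => ?_
        rw [abs_pow]
        exact pow_le_pow_left₀ (abs_nonneg _) (hzK ω) 2
      have hone : Integrable (fun _ : Ω => (1:ℝ)) P := integrable_const 1
      have he₁bdd : ∀ x : ℝ, Real.exp (x - x^2/2) ≤ Real.exp (1/2 : ℝ) := by
        intro x
        rw [Real.exp_le_exp]
        nlinarith [sq_nonneg (x - 1)]
      have hA₁int : Integrable A₁ P := by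
        refine intOf _ (1 * Real.exp (1/2 : ℝ)) (((hccmeas.const_add 1).div_const 2).aestronglyMeasurable.mul
          ((Real.measurable_exp.comp ((hzmeas.sub ((hzmeas.pow_const 2).div_const 2)))).aestronglyMeasurable)) ?_
        refine Filter.Eventually.of_forall fun ω => ?_
        rw [abs_mul]
        refine mul_le_mul ?_ ?_ (abs_nonneg _) zero_le_one
        · have := hc1 ω; rw [abs_le] at this ⊢; constructor <;> [linarith; linarith]
        · rw [abs_of_pos (Real.exp_pos _)]; exact he₁bdd _
      have hA₂int : Integrable A₂ P := by
        refine intOf _ (1 * Real.exp (1/2 : ℝ)) (((measurable_const.sub hccmeas).div_const 2).aestronglyMeasurable.mul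
          ((Real.measurable_exp.comp ((hzmeas.neg.sub ((hzmeas.pow_const 2).div_const 2)))).aestronglyMeasurable)) ?_
        refine Filter.Eventually.of_forall fun ω => ?_
        rw [abs_mul]
        refine mul_le_mul ?_ ?_ (abs_nonneg _) zero_le_one
        · have := hc1 ω; rw [abs_le] at this ⊢; constructor <;> [linarith; linarith]
        · rw [abs_of_pos (Real.exp_pos _)]
          have := he₁bdd (-(z ω))
          simpa [neg_sq] using this
      -- step A : peel off the predictable factor exp(-M/2)
      have hsplitY : ∀ ω, Y ω = Real.exp (-(M (t+1) ω)/2) * W ω := by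
        intro ω
        rw [hY, hWdef, ← Real.exp_add, Real.exp_eq_exp]
        ring
      have hexpMSM : StronglyMeasurable[ℱ t] (fun ω => Real.exp (-(M (t+1) ω)/2)) :=
        (Real.continuous_exp.comp (continuous_neg.div_const 2)).comp_stronglyMeasurable hMSM
      have hprodInt : Integrable (fun ω => Real.exp (-(M (t+1) ω)/2) * W ω) P :=
        hYint.congr (Filter.Eventually.of_forall hsplitY)
      have e1 : P[Y | ℱ t] =ᵐ[P] P[fun ω => Real.exp (-(M (t+1) ω)/2) * W ω | ℱ t] :=
        condExp_congr_ae (Filter.Eventually.of_forall hsplitY)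
      have e2 : P[fun ω => Real.exp (-(M (t+1) ω)/2) * W ω | ℱ t] =ᵐ[P]
          fun ω => Real.exp (-(M (t+1) ω)/2) * (P[W | ℱ t]) ω :=
        condExp_mul_of_stronglyMeasurable_left hexpMSM hprodInt hWint
      -- step B : convexity bound
      have hWA : ∀ ω, W ω ≤ A₁ ω + A₂ ω := by
        intro ω
        have h := exp_convex_bound (z ω) (hc1 ω)
        have hfact : W ω = Real.exp (z ω * cc ω) * Real.exp (-((z ω)^2/2)) := by
          rw [hWdef, ← Real.exp_add, Real.exp_eq_exp]; ring
        have h2 : Real.exp (z ω * cc ω) * Real.exp (-((z ω)^2/2)) ≤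
            ((1 + cc ω)/2 * Real.exp (z ω) + (1 - cc ω)/2 * Real.exp (-(z ω))) *
              Real.exp (-((z ω)^2/2)) :=
          mul_le_mul_of_nonneg_right h (Real.exp_pos _).le
        rw [hfact]
        refine h2.trans (le_of_eq ?_)
        rw [hA₁def, hA₂def]
        have q1 : Real.exp (z ω) * Real.exp (-((z ω)^2/2)) = Real.exp (z ω - (z ω)^2/2) := by
          rw [← Real.exp_add, Real.exp_eq_exp]; ring
        have q2 : Real.exp (-(z ω)) * Real.exp (-((z ω)^2/2)) =
            Real.exp (-(z ω) - (z ω)^2/2) := by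
          rw [← Real.exp_add, Real.exp_eq_exp]; ring
        calc ((1 + cc ω)/2 * Real.exp (z ω) + (1 - cc ω)/2 * Real.exp (-(z ω))) *
              Real.exp (-((z ω)^2/2))
            = (1 + cc ω)/2 * (Real.exp (z ω) * Real.exp (-((z ω)^2/2))) +
              (1 - cc ω)/2 * (Real.exp (-(z ω)) * Real.exp (-((z ω)^2/2))) := by ring
          _ = (1 + cc ω)/2 * Real.exp (z ω - (z ω)^2/2) +
              (1 - cc ω)/2 * Real.exp (-(z ω) - (z ω)^2/2) := by rw [q1, q2]
      have hstepB : P[W | ℱ t] ≤ᵐ[P] P[fun ω => A₁ ω + A₂ ω | ℱ t] :=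
        condExp_mono hWint (hA₁int.add hA₂int) (Filter.Eventually.of_forall hWA)
      -- step C : factorization by conditional independence
      have csum : P[fun ω => A₁ ω + A₂ ω | ℱ t] =ᵐ[P] P[A₁ | ℱ t] + P[A₂ | ℱ t] :=
        condExp_add hA₁int hA₂int (ℱ t)
      have hφ₁ : Measurable (fun a : ℝ => (1 + a)/2) := (measurable_const.add measurable_id).div_const 2
      have hφ₂ : Measurable (fun a : ℝ => (1 - a)/2) := (measurable_const.sub measurable_id).div_const 2
      have hψ₁ : Measurable (fun x : ℝ => Real.exp (x - x^2/2)) :=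
        Real.measurable_exp.comp (measurable_id.sub ((measurable_id.pow_const 2).div_const 2))
      have hψ₂ : Measurable (fun x : ℝ => Real.exp (-x - x^2/2)) :=
        Real.measurable_exp.comp (measurable_id.neg.sub ((measurable_id.pow_const 2).div_const 2))
      have hci₁ : CondIndepFun (ℱ t) (ℱ.le t) (fun ω => (1 + cc ω)/2)
          (fun ω => Real.exp (z ω - (z ω)^2/2)) P :=
        hindep'.symm.comp hφ₁ hψ₁
      have hci₂ : CondIndepFun (ℱ t) (ℱ.le t) (fun ω => (1 - cc ω)/2)
          (fun ω => Real.exp (-(z ω) - (z ω)^2/2)) P :=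
        hindep'.symm.comp hφ₂ hψ₂
      have hbf₁ : ∀ ω, |(1 + cc ω)/2| ≤ 1 := by
        intro ω; have := hc1 ω; rw [abs_le] at this ⊢; constructor <;> [linarith; linarith]
      have hbf₂ : ∀ ω, |(1 - cc ω)/2| ≤ 1 := by
        intro ω; have := hc1 ω; rw [abs_le] at this ⊢; constructor <;> [linarith; linarith]
      have hbg₁ : ∀ ω, |Real.exp (z ω - (z ω)^2/2)| ≤ Real.exp (1/2 : ℝ) := by
        intro ω; rw [abs_of_pos (Real.exp_pos _)]; exact he₁bdd _
      have hbg₂ : ∀ ω, |Real.exp (-(z ω) - (z ω)^2/2)| ≤ Real.exp (1/2 : ℝ) := by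
        intro ω; rw [abs_of_pos (Real.exp_pos _)]
        have := he₁bdd (-(z ω)); simpa [neg_sq] using this
      have c1 : P[A₁ | ℱ t] =ᵐ[P] fun ω => (P[fun ω' => (1 + cc ω')/2 | ℱ t]) ω *
          (P[fun ω' => Real.exp (z ω' - (z ω')^2/2) | ℱ t]) ω :=
        condexp_mul_of_condIndepFun (ℱ.le t) ((hφ₁.comp hccmeas)) (hψ₁.comp hzmeas) 1
          (Real.exp (1/2 : ℝ)) hbf₁ hbg₁ hci₁
      have c2 : P[A₂ | ℱ t] =ᵐ[P] fun ω => (P[fun ω' => (1 - cc ω')/2 | ℱ t]) ω *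
          (P[fun ω' => Real.exp (-(z ω') - (z ω')^2/2) | ℱ t]) ω :=
        condexp_mul_of_condIndepFun (ℱ.le t) ((hφ₂.comp hccmeas)) (hψ₂.comp hzmeas) 1
          (Real.exp (1/2 : ℝ)) hbf₂ hbg₂ hci₂
      -- step D : bound the z-factors
      have hE₁ : P[fun ω' => Real.exp (z ω' - (z ω')^2/2) | ℱ t] ≤ᵐ[P]
          P[fun ω' => 1 + z ω' + (z ω')^2/2 | ℱ t] := by
        refine condExp_mono ?_ ?_ (Filter.Eventually.of_forall fun ω => exp_quad_le (z ω))
        · exact intOf _ _ ((hψ₁.comp hzmeas).aestronglyMeasurable)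
            (Filter.Eventually.of_forall hbg₁)
        · exact (hone.add hzint).add (hzsqint.div_const 2)
      have hE₂ : P[fun ω' => Real.exp (-(z ω') - (z ω')^2/2) | ℱ t] ≤ᵐ[P]
          P[fun ω' => 1 - z ω' + (z ω')^2/2 | ℱ t] := by
        refine condExp_mono ?_ ?_ (Filter.Eventually.of_forall fun ω => ?_)
        · exact intOf _ _ ((hψ₂.comp hzmeas).aestronglyMeasurable)
            (Filter.Eventually.of_forall hbg₂)
        · exact (hone.sub hzint).add (hzsqint.div_const 2)
        · have := exp_quad_le (-(z ω)); simpa [neg_sq, sub_eq_add_neg] using this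
      have d1 : P[fun ω' => 1 + z ω' + (z ω')^2/2 | ℱ t] =ᵐ[P]
          P[fun ω' => 1 + z ω' | ℱ t] + P[fun ω' => (z ω')^2/2 | ℱ t] :=
        condExp_add (hone.add hzint) (hzsqint.div_const 2) (ℱ t)
      have d1' : P[fun ω' => 1 - z ω' + (z ω')^2/2 | ℱ t] =ᵐ[P]
          P[fun ω' => 1 - z ω' | ℱ t] + P[fun ω' => (z ω')^2/2 | ℱ t] :=
        condExp_add (hone.sub hzint) (hzsqint.div_const 2) (ℱ t)
      have d2 : P[fun ω' => 1 + z ω' | ℱ t] =ᵐ[P]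
          P[fun _ => (1:ℝ) | ℱ t] + P[z | ℱ t] := condExp_add hone hzint (ℱ t)
      have d2' : P[fun ω' => 1 - z ω' | ℱ t] =ᵐ[P]
          P[fun _ => (1:ℝ) | ℱ t] - P[z | ℱ t] := condExp_sub hone hzint (ℱ t)
      have d3 : P[fun _ : Ω => (1:ℝ) | ℱ t] = fun _ => (1:ℝ) := condExp_const (ℱ.le t) 1
      have d4 : P[fun ω' => (z ω')^2/2 | ℱ t] =ᵐ[P] (2⁻¹:ℝ) • P[fun ω' => (z ω')^2 | ℱ t] := by
        have hrw : (fun ω' => (z ω')^2/2) = (2⁻¹:ℝ) • (fun ω' => (z ω')^2) := by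
          funext ω'
          simp [Pi.smul_apply, smul_eq_mul]
          ring
        rw [hrw]
        exact condExp_smul (2⁻¹:ℝ) _ (ℱ t)
      -- step E : the c-factors
      have hp0 : (0:Ω → ℝ) ≤ᵐ[P] P[fun ω' => (1 + cc ω')/2 | ℱ t] := by
        refine condExp_nonneg (Filter.Eventually.of_forall fun ω => ?_)
        have := hc1 ω; rw [abs_le] at this
        simp only [Pi.zero_apply]
        linarith
      have hq0 : (0:Ω → ℝ) ≤ᵐ[P] P[fun ω' => (1 - cc ω')/2 | ℱ t] := by
        refine condExp_nonneg (Filter.Eventually.of_forall fun ω => ?_)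
        have := hc1 ω; rw [abs_le] at this
        simp only [Pi.zero_apply]
        linarith
      have hf₁int : Integrable (fun ω => (1 + cc ω)/2) P :=
        intOf _ 1 ((hφ₁.comp hccmeas).aestronglyMeasurable)
          (Filter.Eventually.of_forall hbf₁)
      have hf₂int : Integrable (fun ω => (1 - cc ω)/2) P :=
        intOf _ 1 ((hφ₂.comp hccmeas).aestronglyMeasurable)
          (Filter.Eventually.of_forall hbf₂)
      have hpq : P[fun ω' => (1 + cc ω')/2 | ℱ t] + P[fun ω' => (1 - cc ω')/2 | ℱ t]
          =ᵐ[P] fun _ => (1:ℝ) := by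
        have h := (condExp_add hf₁int hf₂int (m := ℱ t) (μ := P)).symm
        have hrw : (fun ω => (1 + cc ω)/2) + (fun ω => (1 - cc ω)/2) = fun _ : Ω => (1:ℝ) := by
          funext ω
          simp [Pi.add_apply]
          ring
        refine h.trans ?_
        rw [hrw, d3]
      -- final assembly
      filter_upwards [e1, e2, hstepB, csum, c1, c2, hE₁, hE₂, d1, d1', d2, d2', d4,
        hp0, hq0, hpq, hz0, hMnonneg (t+1)] with ω he1 he2 hB hcs hc1' hc2' hE1 hE2 hd1 hd1'
        hd2 hd2' hd4 hp hq hpq' hz0' hM0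
      simp only [Pi.add_apply, Pi.sub_apply, Pi.zero_apply, Pi.smul_apply, smul_eq_mul] at *
      set m := M (t+1) ω with hm
      set p := (P[fun ω' => (1 + cc ω')/2 | ℱ t]) ω
      set q := (P[fun ω' => (1 - cc ω')/2 | ℱ t]) ω
      set E1v := (P[fun ω' => Real.exp (z ω' - (z ω')^2/2) | ℱ t]) ω
      set E2v := (P[fun ω' => Real.exp (-(z ω') - (z ω')^2/2) | ℱ t]) ω
      have hvm : (P[fun ω' => (z ω')^2 | ℱ t]) ω = m := by rw [hm, hMrfl]
      have h3 : (P[fun _ : Ω => (1:ℝ) | ℱ t]) ω = 1 := by rw [d3]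
      have hE1' : E1v ≤ 1 + 0 + m/2 := by
        rw [hd1, hd2, h3, hz0', hd4, hvm] at hE1
        linarith
      have hE2' : E2v ≤ 1 - 0 + m/2 := by
        rw [hd1', hd2', h3, hz0', hd4, hvm] at hE2
        linarith
      have hchain : (P[Y | ℱ t]) ω ≤ Real.exp (-m/2) * (1 + m/2) := by
        rw [he1, he2]
        have hW' : (P[W | ℱ t]) ω ≤ 1 + m/2 := by
          calc (P[W | ℱ t]) ω ≤ (P[fun ω => A₁ ω + A₂ ω | ℱ t]) ω := hB
          _ = p * E1v + q * E2v := by rw [hcs, hc1', hc2']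
          _ ≤ p * (1 + 0 + m/2) + q * (1 - 0 + m/2) := by
              refine add_le_add ?_ ?_
              · exact mul_le_mul_of_nonneg_left hE1' hp
              · exact mul_le_mul_of_nonneg_left hE2' hq
          _ = (p + q) * (1 + m/2) := by ring
          _ = 1 + m/2 := by rw [hpq']; ring
        exact mul_le_mul_of_nonneg_left hW' (Real.exp_pos _).le
      have hfin : Real.exp (-m/2) * (1 + m/2) ≤ 1 := by
        rw [show -m/2 = -(m/2) by ring, Real.exp_neg, inv_mul_eq_div,
          div_le_one (Real.exp_pos _)]
        linarith [Real.add_one_le_exp (m/2)]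
      exact hchain.trans hfin
    have hcond0 : (0:Ω → ℝ) ≤ᵐ[P] P[Y | ℱ t] :=
      condExp_nonneg (Filter.Eventually.of_forall hYnonneg)
    have hPYae : AEStronglyMeasurable (P[Y | ℱ t]) P :=
      (stronglyMeasurable_condExp.mono (ℱ.le t)).aestronglyMeasurable
    have hGPYint : Integrable (fun ω => G ω * (P[Y | ℱ t]) ω) P := by
      refine intOf _ (Real.exp (t*K) * 1) (hGae.mul hPYae) ?_
      filter_upwards [hGbound, hY1, hcond0] with ω h1 h2 h3
      rw [abs_mul]
      exact mul_le_mul h1 (by rw [abs_of_nonneg h3]; exact h2) (abs_nonneg _)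
        (Real.exp_pos _).le
    calc ∫ ω, G ω * Y ω ∂P
        = ∫ ω, (P[fun ω' => G ω' * Y ω' | ℱ t]) ω ∂P :=
          (integral_condExp (ℱ.le t)).symm
      _ = ∫ ω, G ω * (P[Y | ℱ t]) ω ∂P := by
          refine integral_congr_ae ?_
          exact condExp_mul_of_stronglyMeasurable_left hGSM hGYint hYint
      _ ≤ ∫ ω, G ω ∂P := by
          refine integral_mono_ae hGPYint hGint ?_
          filter_upwards [hY1, hcond0] with ω h1 h2
          calc G ω * (P[Y | ℱ t]) ω ≤ G ω * 1 :=
            mul_le_mul_of_nonneg_left h1 (hGnonneg ω)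
          _ = G ω := mul_one _
      _ ≤ 1 := iht

set_option maxHeartbeats 2000000 in
/-- Lemma A.2 (de la Peña / Kim–Paik mgf bound) for conditionally
independent, bounded martingale-difference factors. -/
theorem stmt_15 {Ω : Type*} [mΩ : MeasurableSpace Ω] [StandardBorelSpace Ω]
    (P : Measure Ω) [IsProbabilityMeasure P]
    (d t : ℕ) (hd : 1 ≤ d)
    (ℱ : Filtration ℕ mΩ)
    (X : ℕ → Ω → Fin d → ℝ) (c : ℕ → Ω → ℝ) (B : ℝ)
    (hXmeas : ∀ τ ∈ Finset.Icc 1 t, Measurable[ℱ τ] (X τ))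
    (hcmeas : ∀ τ ∈ Finset.Icc 1 t, Measurable[ℱ τ] (c τ))
    (hXcond : ∀ τ ∈ Finset.Icc 1 t, P[X τ | ℱ (τ - 1)] =ᵐ[P] 0)
    (hindep : ∀ τ ∈ Finset.Icc 1 t,
      CondIndepFun (ℱ (τ - 1)) (ℱ.le (τ - 1)) (X τ) (c τ) P)
    (hXbdd : ∀ τ ∈ Finset.Icc 1 t, ∀ᵐ ω ∂P, Real.sqrt (X τ ω ⬝ᵥ X τ ω) ≤ B)
    (hcbdd : ∀ τ ∈ Finset.Icc 1 t, ∀ᵐ ω ∂P, |c τ ω| ≤ 1)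
    (u : Fin d → ℝ) :
    ∫⁻ ω, ENNReal.ofReal (Real.exp
      (u ⬝ᵥ (∑ τ ∈ Finset.Icc 1 t, c τ ω • X τ ω) -
        (1 / 2) * ((∑ τ ∈ Finset.Icc 1 t, (u ⬝ᵥ X τ ω) ^ 2) +
          ∑ τ ∈ Finset.Icc 1 t,
            (P[fun ω' => (u ⬝ᵥ X τ ω') ^ 2 | ℱ (τ - 1)]) ω))) ∂P ≤ 1 := by
  classical
  set K : ℝ := max 0 ((∑ i, |u i|) * B) with hKdef
  have hK : 0 ≤ K := le_max_left _ _
  set tr : ℝ → ℝ → ℝ := fun K' x => max (-K') (min K' x) with htrdef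
  have htr_eq : ∀ (K' x : ℝ), |x| ≤ K' → tr K' x = x := by
    intro K' x hx
    rw [abs_le] at hx
    rw [htrdef]
    simp only
    rw [min_eq_right hx.2, max_eq_right hx.1]
  have htr_le : ∀ (K' x : ℝ), 0 ≤ K' → |tr K' x| ≤ K' := by
    intro K' x h
    rw [abs_le]
    refine ⟨?_, ?_⟩
    · rw [htrdef]; simp only; rw [neg_le]
      exact (neg_le_neg (le_max_left _ _)).trans (by rw [neg_neg])
    · exact max_le (by linarith) (min_le_left _ _)
  have htr_meas : ∀ K' : ℝ, Measurable (tr K') :=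
    fun K' => measurable_const.max (measurable_const.min measurable_id)
  set Z : ℕ → Ω → ℝ := fun τ ω => tr K (u ⬝ᵥ X τ ω) with hZdef
  set Cc : ℕ → Ω → ℝ := fun τ ω => tr 1 (c τ ω) with hCdef
  have hdotv : Measurable (fun v : Fin d → ℝ => u ⬝ᵥ v) := by
    have : (fun v : Fin d → ℝ => u ⬝ᵥ v) = fun v => ∑ i, u i * v i := rfl
    rw [this]
    exact Finset.measurable_sum _ fun i _ => measurable_const.mul (measurable_pi_apply i)
  have hdotmeas : ∀ τ ∈ Finset.Icc 1 t, Measurable[ℱ τ] fun ω => u ⬝ᵥ X τ ω :=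
    fun τ hτ => hdotv.comp (hXmeas τ hτ)
  have hZmeas' : ∀ τ ∈ Finset.Icc 1 t, Measurable[ℱ τ] (Z τ) :=
    fun τ hτ => (htr_meas K).comp (hdotmeas τ hτ)
  have hCmeas' : ∀ τ ∈ Finset.Icc 1 t, Measurable[ℱ τ] (Cc τ) :=
    fun τ hτ => (htr_meas 1).comp (hcmeas τ hτ)
  have hZbdd' : ∀ τ ∈ Finset.Icc 1 t, ∀ ω, |Z τ ω| ≤ K :=
    fun τ _ ω => htr_le _ _ hK
  have hCbdd' : ∀ τ ∈ Finset.Icc 1 t, ∀ ω, |Cc τ ω| ≤ 1 :=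
    fun τ _ ω => htr_le _ _ zero_le_one
  -- coordinatewise bound
  have hcoord : ∀ (v : Fin d → ℝ) (i : Fin d), |v i| ≤ Real.sqrt (v ⬝ᵥ v) := by
    intro v i
    have h1 : v i * v i ≤ v ⬝ᵥ v := by
      have : v ⬝ᵥ v = ∑ j, v j * v j := rfl
      rw [this]
      exact Finset.single_le_sum (f := fun j => v j * v j)
        (fun j _ => mul_self_nonneg (v j)) (Finset.mem_univ i)
    calc |v i| = Real.sqrt ((v i)^2) := (Real.sqrt_sq_eq_abs _).symm
    _ ≤ Real.sqrt (v ⬝ᵥ v) := Real.sqrt_le_sqrt (by nlinarith)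
  have hdot_le : ∀ v : Fin d → ℝ, Real.sqrt (v ⬝ᵥ v) ≤ B → |u ⬝ᵥ v| ≤ K := by
    intro v hv
    have hvi : ∀ i, |v i| ≤ B := fun i => (hcoord v i).trans hv
    have h2 : |u ⬝ᵥ v| ≤ (∑ i, |u i|) * B := by
      calc |u ⬝ᵥ v| = |∑ i, u i * v i| := rfl
      _ ≤ ∑ i, |u i * v i| := Finset.abs_sum_le_sum_abs _ _
      _ = ∑ i, |u i| * |v i| := by simp [abs_mul]
      _ ≤ ∑ i, |u i| * B := Finset.sum_le_sum fun i _ =>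
          mul_le_mul_of_nonneg_left (hvi i) (abs_nonneg _)
      _ = (∑ i, |u i|) * B := by rw [Finset.sum_mul]
    exact h2.trans (le_max_right _ _)
  have hZae : ∀ τ ∈ Finset.Icc 1 t, Z τ =ᵐ[P] fun ω => u ⬝ᵥ X τ ω :=
    fun τ hτ => (hXbdd τ hτ).mono fun ω hω => htr_eq _ _ (hdot_le _ hω)
  have hCae : ∀ τ ∈ Finset.Icc 1 t, Cc τ =ᵐ[P] c τ :=
    fun τ hτ => (hcbdd τ hτ).mono fun ω hω => htr_eq _ _ hω
  -- integrability of X and its coordinates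
  have hXint : ∀ τ ∈ Finset.Icc 1 t, Integrable (X τ) P := by
    intro τ hτ
    refine (integrable_const (max 0 B)).mono
      (((hXmeas τ hτ).mono (ℱ.le τ) le_rfl).stronglyMeasurable.aestronglyMeasurable)
      ((hXbdd τ hτ).mono fun ω hω => ?_)
    have hB0 : 0 ≤ B := (Real.sqrt_nonneg _).trans hω
    rw [Real.norm_eq_abs, abs_of_nonneg (le_max_left 0 B)]
    refine (pi_norm_le_iff_of_nonneg (le_max_left 0 B)).2 fun i => ?_
    rw [Real.norm_eq_abs]
    exact ((hcoord _ i).trans hω).trans (le_max_right _ _)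
  have hXi_int : ∀ τ ∈ Finset.Icc 1 t, ∀ i, Integrable (fun ω => X τ ω i) P := by
    intro τ hτ i
    refine (integrable_const (max 0 B)).mono
      (((measurable_pi_apply i).comp ((hXmeas τ hτ).mono (ℱ.le τ) le_rfl)).aestronglyMeasurable)
      ((hXbdd τ hτ).mono fun ω hω => ?_)
    rw [Real.norm_eq_abs, Real.norm_eq_abs, abs_of_nonneg (le_max_left 0 B)]
    exact ((hcoord _ i).trans hω).trans (le_max_right _ _)
  have hdotint : ∀ τ ∈ Finset.Icc 1 t, Integrable (fun ω => u ⬝ᵥ X τ ω) P := by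
    intro τ hτ
    refine (integrable_const K).mono
      (((hdotmeas τ hτ).mono (ℱ.le τ) le_rfl).aestronglyMeasurable)
      ((hXbdd τ hτ).mono fun ω hω => ?_)
    rw [Real.norm_eq_abs, Real.norm_eq_abs, abs_of_nonneg hK]
    exact hdot_le _ hω
  -- conditional mean zero
  have hZcond' : ∀ τ ∈ Finset.Icc 1 t, P[Z τ | ℱ (τ - 1)] =ᵐ[P] 0 := by
    intro τ hτ
    have h1 : P[Z τ | ℱ (τ - 1)] =ᵐ[P] P[fun ω => u ⬝ᵥ X τ ω | ℱ (τ - 1)] :=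
      condExp_congr_ae (hZae τ hτ)
    have h2 : (0 : Ω → ℝ) =ᵐ[P] P[fun ω => u ⬝ᵥ X τ ω | ℱ (τ - 1)] := by
      refine ae_eq_condExp_of_forall_setIntegral_eq (ℱ.le (τ-1)) (hdotint τ hτ)
        (fun s _ _ => (integrable_zero _ _ _).integrableOn) (fun s hs hμs => ?_)
        ⟨fun _ => 0, stronglyMeasurable_const, Filter.EventuallyEq.rfl⟩
      have hXz : ∫ ω in s, X τ ω ∂P = 0 := by
        rw [← setIntegral_condExp (ℱ.le (τ-1)) (hXint τ hτ) hs]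
        calc ∫ ω in s, (P[X τ | ℱ (τ-1)]) ω ∂P
            = ∫ ω in s, (0 : Fin d → ℝ) ∂P := by
              refine setIntegral_congr_ae ((ℱ.le (τ-1)) s hs) ?_
              exact (hXcond τ hτ).mono fun ω h _ => h
          _ = 0 := by simp
      have hcomp : ∀ i, ∫ ω in s, X τ ω i ∂P = 0 := by
        intro i
        have hpr := (ContinuousLinearMap.proj (R := ℝ) (φ := fun _ : Fin d => ℝ) i
          ).integral_comp_comm ((hXint τ hτ).integrableOn (s := s))
        simp only [ContinuousLinearMap.proj_apply] at hpr
        rw [hpr, hXz]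
        rfl
      have hrw : ∫ ω in s, u ⬝ᵥ X τ ω ∂P = ∑ i, u i * ∫ ω in s, X τ ω i ∂P := by
        calc ∫ ω in s, u ⬝ᵥ X τ ω ∂P = ∫ ω in s, ∑ i, u i * X τ ω i ∂P := rfl
        _ = ∑ i, ∫ ω in s, u i * X τ ω i ∂P :=
            integral_finset_sum _ fun i _ => ((hXi_int τ hτ i).integrableOn).const_mul (u i)
        _ = ∑ i, u i * ∫ ω in s, X τ ω i ∂P := by
            refine Finset.sum_congr rfl fun i _ => ?_
            exact integral_const_mul _ _
      rw [hrw]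
      simp [hcomp]
    exact h1.trans h2.symm
  -- conditional independence of the truncations
  have hindepZC : ∀ τ ∈ Finset.Icc 1 t,
      CondIndepFun (ℱ (τ - 1)) (ℱ.le (τ - 1)) (Z τ) (Cc τ) P := by
    intro τ hτ
    exact (hindep τ hτ).comp ((htr_meas K).comp hdotv) (htr_meas 1)
  -- main estimate
  have hmain := mgf_helper P ℱ Z Cc K hK t hZmeas' hCmeas' hZbdd' hCbdd' hZcond' hindepZC
  -- identification of the integrands
  have hMcongr : ∀ τ ∈ Finset.Icc 1 t,
      P[fun ω' => (u ⬝ᵥ X τ ω') ^ 2 | ℱ (τ - 1)] =ᵐ[P]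
        P[fun ω' => (Z τ ω') ^ 2 | ℱ (τ - 1)] := by
    intro τ hτ
    refine condExp_congr_ae ?_
    refine (hZae τ hτ).mono fun ω h => ?_
    show (u ⬝ᵥ X τ ω)^2 = (Z τ ω)^2
    rw [h]
  have hAE : ∀ᵐ ω ∂P, ∀ τ, τ ∈ Finset.Icc 1 t →
      (Z τ ω = u ⬝ᵥ X τ ω ∧ Cc τ ω = c τ ω ∧
        (P[fun ω' => (u ⬝ᵥ X τ ω') ^ 2 | ℱ (τ - 1)]) ω =
          (P[fun ω' => (Z τ ω') ^ 2 | ℱ (τ - 1)]) ω) := by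
    rw [ae_all_iff]
    intro τ
    by_cases hτ : τ ∈ Finset.Icc 1 t
    · filter_upwards [hZae τ hτ, hCae τ hτ, hMcongr τ hτ] with ω h1 h2 h3
      exact fun _ => ⟨h1, h2, h3⟩
    · exact Filter.Eventually.of_forall fun ω h => absurd h hτ
  have hdotsum : ∀ ω, u ⬝ᵥ (∑ τ ∈ Finset.Icc 1 t, c τ ω • X τ ω) =
      ∑ τ ∈ Finset.Icc 1 t, c τ ω * (u ⬝ᵥ X τ ω) := by
    intro ω
    calc u ⬝ᵥ (∑ τ ∈ Finset.Icc 1 t, c τ ω • X τ ω)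
        = ∑ i, u i * (∑ τ ∈ Finset.Icc 1 t, c τ ω • X τ ω) i := rfl
      _ = ∑ i, ∑ τ ∈ Finset.Icc 1 t, u i * (c τ ω * X τ ω i) := by
          refine Finset.sum_congr rfl fun i _ => ?_
          rw [Finset.sum_apply, Finset.mul_sum]
          exact Finset.sum_congr rfl fun τ _ => by simp [Pi.smul_apply, smul_eq_mul]
      _ = ∑ τ ∈ Finset.Icc 1 t, ∑ i, u i * (c τ ω * X τ ω i) := Finset.sum_comm
      _ = ∑ τ ∈ Finset.Icc 1 t, c τ ω * (u ⬝ᵥ X τ ω) := by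
          refine Finset.sum_congr rfl fun τ _ => ?_
          have hr : u ⬝ᵥ X τ ω = ∑ i, u i * X τ ω i := rfl
          rw [hr, Finset.mul_sum]
          exact Finset.sum_congr rfl fun i _ => by ring
  have hsum3 : ∀ (A Bf Cf : ℕ → ℝ),
      ∑ τ ∈ Finset.Icc 1 t, (A τ - (1/2 : ℝ) * (Bf τ + Cf τ)) =
        (∑ τ ∈ Finset.Icc 1 t, A τ) - (1/2 : ℝ) *
          ((∑ τ ∈ Finset.Icc 1 t, Bf τ) + ∑ τ ∈ Finset.Icc 1 t, Cf τ) := by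
    intro A Bf Cf
    rw [Finset.sum_sub_distrib, ← Finset.sum_add_distrib, Finset.mul_sum]
  have hpt : ∀ᵐ ω ∂P, ENNReal.ofReal (Real.exp
      (u ⬝ᵥ (∑ τ ∈ Finset.Icc 1 t, c τ ω • X τ ω) -
        (1 / 2) * ((∑ τ ∈ Finset.Icc 1 t, (u ⬝ᵥ X τ ω) ^ 2) +
          ∑ τ ∈ Finset.Icc 1 t, (P[fun ω' => (u ⬝ᵥ X τ ω') ^ 2 | ℱ (τ - 1)]) ω))) =
      ENNReal.ofReal (Real.exp (∑ τ ∈ Finset.Icc 1 t, (Z τ ω * Cc τ ω -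
        (1/2) * ((Z τ ω)^2 + (P[fun ω' => (Z τ ω')^2 | ℱ (τ - 1)]) ω)))) := by
    filter_upwards [hAE] with ω hω
    have harg : u ⬝ᵥ (∑ τ ∈ Finset.Icc 1 t, c τ ω • X τ ω) -
        (1 / 2) * ((∑ τ ∈ Finset.Icc 1 t, (u ⬝ᵥ X τ ω) ^ 2) +
          ∑ τ ∈ Finset.Icc 1 t, (P[fun ω' => (u ⬝ᵥ X τ ω') ^ 2 | ℱ (τ - 1)]) ω) =
        ∑ τ ∈ Finset.Icc 1 t, (Z τ ω * Cc τ ω -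
          (1/2) * ((Z τ ω)^2 + (P[fun ω' => (Z τ ω')^2 | ℱ (τ - 1)]) ω)) := by
      rw [hdotsum ω, hsum3]
      have e1 : ∑ τ ∈ Finset.Icc 1 t, c τ ω * (u ⬝ᵥ X τ ω) =
          ∑ τ ∈ Finset.Icc 1 t, Z τ ω * Cc τ ω := by
        refine Finset.sum_congr rfl fun τ hτ => ?_
        obtain ⟨h1, h2, _⟩ := hω τ hτ
        rw [h1, h2]
        ring
      have e2 : ∑ τ ∈ Finset.Icc 1 t, (u ⬝ᵥ X τ ω)^2 =
          ∑ τ ∈ Finset.Icc 1 t, (Z τ ω)^2 := by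
        refine Finset.sum_congr rfl fun τ hτ => ?_
        obtain ⟨h1, _, _⟩ := hω τ hτ
        rw [h1]
      have e3 : ∑ τ ∈ Finset.Icc 1 t, (P[fun ω' => (u ⬝ᵥ X τ ω') ^ 2 | ℱ (τ - 1)]) ω =
          ∑ τ ∈ Finset.Icc 1 t, (P[fun ω' => (Z τ ω') ^ 2 | ℱ (τ - 1)]) ω := by
        refine Finset.sum_congr rfl fun τ hτ => ?_
        exact (hω τ hτ).2.2
      rw [e1, e2, e3]
    rw [harg]
  rw [lintegral_congr_ae hpt]
  -- integrability of the right-hand integrand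
  set g : Ω → ℝ := fun ω => Real.exp (∑ τ ∈ Finset.Icc 1 t, (Z τ ω * Cc τ ω -
    (1/2) * ((Z τ ω)^2 + (P[fun ω' => (Z τ ω')^2 | ℱ (τ - 1)]) ω))) with hgdef
  have hgSM : StronglyMeasurable g := by
    apply Continuous.comp_stronglyMeasurable Real.continuous_exp
    apply Finset.stronglyMeasurable_fun_sum
    intro τ hτ
    have hz : StronglyMeasurable (Z τ) :=
      ((hZmeas' τ hτ).mono (ℱ.le τ) le_rfl).stronglyMeasurable
    have hc : StronglyMeasurable (Cc τ) :=
      ((hCmeas' τ hτ).mono (ℱ.le τ) le_rfl).stronglyMeasurable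
    have hzsq : StronglyMeasurable (fun ω => (Z τ ω)^2) :=
      (continuous_pow 2).comp_stronglyMeasurable hz
    have hm : StronglyMeasurable (P[fun ω' => (Z τ ω')^2 | ℱ (τ - 1)]) :=
      stronglyMeasurable_condExp.mono (ℱ.le (τ-1))
    exact (hz.mul hc).sub (stronglyMeasurable_const.mul (hzsq.add hm))
  have hMnn : ∀ᵐ ω ∂P, ∀ τ, 0 ≤ (P[fun ω' => (Z τ ω')^2 | ℱ (τ - 1)]) ω := by
    rw [ae_all_iff]
    intro τ
    have := condExp_nonneg (μ := P) (m := ℱ (τ-1))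
      (f := fun ω' => (Z τ ω')^2) (Filter.Eventually.of_forall fun ω => sq_nonneg _)
    filter_upwards [this] with ω h
    simpa using h
  have hgbdd : ∀ᵐ ω ∂P, |g ω| ≤ Real.exp (t * K) := by
    filter_upwards [hMnn] with ω hω
    rw [hgdef, abs_of_pos (Real.exp_pos _), Real.exp_le_exp]
    calc ∑ τ ∈ Finset.Icc 1 t, (Z τ ω * Cc τ ω -
          (1/2) * ((Z τ ω)^2 + (P[fun ω' => (Z τ ω')^2 | ℱ (τ - 1)]) ω))
        ≤ ∑ τ ∈ Finset.Icc 1 t, K := by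
          refine Finset.sum_le_sum fun τ hτ => ?_
          have h1 : Z τ ω * Cc τ ω ≤ K := by
            calc Z τ ω * Cc τ ω ≤ |Z τ ω * Cc τ ω| := le_abs_self _
            _ = |Z τ ω| * |Cc τ ω| := abs_mul _ _
            _ ≤ K * 1 := mul_le_mul (hZbdd' τ hτ ω) (hCbdd' τ hτ ω) (abs_nonneg _) hK
            _ = K := mul_one K
          nlinarith [sq_nonneg (Z τ ω), hω τ]
      _ = t * K := by
          rw [Finset.sum_const, Nat.card_Icc]
          simp [nsmul_eq_mul]
  have hgint : Integrable g P := by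
    refine (integrable_const (Real.exp (t * K))).mono hgSM.aestronglyMeasurable
      (hgbdd.mono fun ω h => ?_)
    rw [Real.norm_eq_abs]
    exact h.trans (le_abs_self _)
  rw [← ofReal_integral_eq_lintegral_ofReal hgint
    (Filter.Eventually.of_forall fun ω => (Real.exp_pos _).le)]
  calc ENNReal.ofReal (∫ ω, g ω ∂P) ≤ ENNReal.ofReal 1 :=
    ENNReal.ofReal_le_ofReal hmain
  _ = 1 := ENNReal.ofReal_one
end
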